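/- arXiv:1105.1642 — 2 statements merged into one kernel-verified Lean document; each statement's English description precedes it below -/
import Mathlib

section
/- Let A be a commutative algebra over 𝕂 which is simultaneously a bounded algebra, and let M, N, P be bounded A-modules. Then there are bornological isomorphisms L^b_A(M ⊗_A^β N, P) ≅ L^b_A(M, N; P) ≅ L^b_A(M, L^b_A(N, P)) ≅ L^b_A(N, L^b_A(M, P)). Moreover, if A, M, N, P are locally convex, there is an algebraic vector space isomorphism L^c_A(M, N; P) ≅ L^c_A(M ⊗_A^π N, P). -/
/-!
STATEMENT 11: for a commutative bounded algebra `A` and bounded `A`-modules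
`M, N, P` there are bornological isomorphisms
`L^b_A(M ⊗_A^β N, P) ≅ L^b_A(M,N;P) ≅ L^b_A(M, L^b_A(N,P)) ≅ L^b_A(N, L^b_A(M,P))`;
moreover, in the locally convex case there is an algebraic vector space isomorphism
`L^c_A(M,N;P) ≅ L^c_A(M ⊗_A^π N, P)`.
-/

open MulOpposite Set
open scoped TensorProduct Pointwise

/-- Convexity expressed through the real scalars of `𝕜` (`𝕜` = ℝ or ℂ). -/
def RCConvex (𝕜 : Type*) [RCLike 𝕜] {E : Type*} [AddCommGroup E] [Module 𝕜 E]
    (s : Set E) : Prop :=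
  ∀ ⦃x⦄, x ∈ s → ∀ ⦃y⦄, y ∈ s → ∀ t : ℝ, 0 ≤ t → t ≤ 1 →
    ((t : 𝕜) • x + (((1 - t : ℝ) : 𝕜)) • y) ∈ s

/-- `τ` is a linear topology: addition and scalar multiplication continuous. -/
def IsLinearTop (𝕜 : Type*) [RCLike 𝕜] (E : Type*) [AddCommGroup E] [Module 𝕜 E]
    (τ : TopologicalSpace E) : Prop :=
  @IsTopologicalAddGroup E τ _ ∧ @ContinuousSMul 𝕜 E _ _ τ

/-- `τ` is a locally convex topology. -/
def IsLCTop (𝕜 : Type*) [RCLike 𝕜] (E : Type*) [AddCommGroup E] [Module 𝕜 E]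
    (τ : TopologicalSpace E) : Prop :=
  IsLinearTop 𝕜 E τ ∧ ∀ U ∈ @nhds E τ 0, ∃ V ∈ @nhds E τ 0, V ⊆ U ∧ RCConvex 𝕜 V

/-- von Neumann boundedness for an explicitly given topology. -/
def VNBdd (𝕜 : Type*) [RCLike 𝕜] {E : Type*} [AddCommGroup E] [Module 𝕜 E]
    (τ : TopologicalSpace E) (s : Set E) : Prop :=
  ∀ V ∈ @nhds E τ 0, Absorbs 𝕜 V s

/-- `f` maps von Neumann bounded sets to von Neumann bounded sets. -/
def BddMap (𝕜 : Type*) [RCLike 𝕜] {E F : Type*} [AddCommGroup E] [Module 𝕜 E]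
    [AddCommGroup F] [Module 𝕜 F]
    (τE : TopologicalSpace E) (τF : TopologicalSpace F) (f : E → F) : Prop :=
  ∀ s : Set E, VNBdd 𝕜 τE s → VNBdd 𝕜 τF (f '' s)

/-- A family `S` of maps is (equi-)bounded: this is exactly von Neumann boundedness
of `S` in the topology of uniform convergence on bounded sets. -/
def FamBdd (𝕜 : Type*) [RCLike 𝕜] {E F : Type*} [AddCommGroup E] [Module 𝕜 E]
    [AddCommGroup F] [Module 𝕜 F]
    (τE : TopologicalSpace E) (τF : TopologicalSpace F) (S : Set (E → F)) : Prop :=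
  ∀ s : Set E, VNBdd 𝕜 τE s → VNBdd 𝕜 τF (⋃ f ∈ S, f '' s)

/-- `𝕜`-bilinearity of a map on a product. -/
def IsBilinMap (𝕜 : Type*) [RCLike 𝕜] {M N E : Type*} [AddCommGroup M] [Module 𝕜 M]
    [AddCommGroup N] [Module 𝕜 N] [AddCommGroup E] [Module 𝕜 E]
    (f : M × N → E) : Prop :=
  (∀ m m' n, f (m + m', n) = f (m, n) + f (m', n)) ∧
  (∀ (c : 𝕜) m n, f (c • m, n) = c • f (m, n)) ∧
  (∀ m n n', f (m, n + n') = f (m, n) + f (m, n')) ∧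
  (∀ (c : 𝕜) m n, f (m, c • n) = c • f (m, n))

/-- `f` is `A`-balanced: `f (m·a, n) = f (m, a·n)`; the right `A`-module structure
on `M` is given by a `Aᵐᵒᵖ`-module structure. -/
def IsBalancedMap (A : Type*) [Ring A] {M N E : Type*} [AddCommGroup M]
    [Module Aᵐᵒᵖ M] [AddCommGroup N] [Module A N] (f : M × N → E) : Prop :=
  ∀ (a : A) (m : M) (n : N), f (op a • m, n) = f (m, a • n)

/-- `τ` is the projective tensor product topology on `M ⊗[𝕜] N`: the finest locally
convex topology making the canonical bilinear map continuous. -/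
def IsProjTensorTop (𝕜 : Type*) [RCLike 𝕜] {M N : Type*} [AddCommGroup M] [Module 𝕜 M]
    [AddCommGroup N] [Module 𝕜 N] (τM : TopologicalSpace M) (τN : TopologicalSpace N)
    (τ : TopologicalSpace (TensorProduct 𝕜 M N)) : Prop :=
  IsLCTop 𝕜 (TensorProduct 𝕜 M N) τ ∧
  @Continuous (M × N) (TensorProduct 𝕜 M N) (@instTopologicalSpaceProd M N τM τN) τ
    (fun p => p.1 ⊗ₜ[𝕜] p.2) ∧
  ∀ τ' : TopologicalSpace (TensorProduct 𝕜 M N), IsLCTop 𝕜 (TensorProduct 𝕜 M N) τ' →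
    @Continuous (M × N) (TensorProduct 𝕜 M N) (@instTopologicalSpaceProd M N τM τN) τ'
      (fun p => p.1 ⊗ₜ[𝕜] p.2) → τ ≤ τ'

/-- `τ` is the bornological tensor product topology on `M ⊗[𝕜] N`: the finest locally
convex topology making the canonical bilinear map bounded. -/
def IsBetaTensorTop (𝕜 : Type*) [RCLike 𝕜] {M N : Type*} [AddCommGroup M] [Module 𝕜 M]
    [AddCommGroup N] [Module 𝕜 N] (τM : TopologicalSpace M) (τN : TopologicalSpace N)
    (τ : TopologicalSpace (TensorProduct 𝕜 M N)) : Prop :=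
  IsLCTop 𝕜 (TensorProduct 𝕜 M N) τ ∧
  BddMap 𝕜 (@instTopologicalSpaceProd M N τM τN) τ (fun p : M × N => p.1 ⊗ₜ[𝕜] p.2) ∧
  ∀ τ' : TopologicalSpace (TensorProduct 𝕜 M N), IsLCTop 𝕜 (TensorProduct 𝕜 M N) τ' →
    BddMap 𝕜 (@instTopologicalSpaceProd M N τM τN) τ' (fun p : M × N => p.1 ⊗ₜ[𝕜] p.2) →
      τ ≤ τ'

/-- The subspace `J₀` of `M ⊗[𝕜] N` spanned by the elements `m·a ⊗ n - m ⊗ a·n`. -/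
def balancedRel (𝕜 A : Type*) [RCLike 𝕜] [Ring A] [Algebra 𝕜 A] (M N : Type*)
    [AddCommGroup M] [Module 𝕜 M] [Module Aᵐᵒᵖ M]
    [AddCommGroup N] [Module 𝕜 N] [Module A N] :
    Submodule 𝕜 (TensorProduct 𝕜 M N) :=
  Submodule.span 𝕜
    {x | ∃ (a : A) (m : M) (n : N), x = (op a • m) ⊗ₜ[𝕜] n - m ⊗ₜ[𝕜] (a • n)}

/-- The subspace `J₀` for modules over a commutative algebra `A`. -/
def balancedRelComm (𝕜 A : Type*) [RCLike 𝕜] [CommRing A] [Algebra 𝕜 A] (M N : Type*)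
    [AddCommGroup M] [Module 𝕜 M] [Module A M]
    [AddCommGroup N] [Module 𝕜 N] [Module A N] :
    Submodule 𝕜 (TensorProduct 𝕜 M N) :=
  Submodule.span 𝕜
    {x | ∃ (a : A) (m : M) (n : N), x = (a • m) ⊗ₜ[𝕜] n - m ⊗ₜ[𝕜] (a • n)}

/-- `A`-bilinearity (on top of `𝕜`-bilinearity) for commutative `A`. -/
def IsABilinMap (A : Type*) [CommRing A] {M N P : Type*} [AddCommGroup M] [Module A M]
    [AddCommGroup N] [Module A N] [AddCommGroup P] [Module A P]
    (f : M × N → P) : Prop :=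
  (∀ (a : A) (m : M) (n : N), f (a • m, n) = a • f (m, n)) ∧
  (∀ (a : A) (m : M) (n : N), f (m, a • n) = a • f (m, n))

/-- Boundedness of a family of curried maps (= boundedness in
`L^b_A(M, L^b_A(N, P))` with the topology of uniform convergence on bounded sets). -/
def CurFamBdd (𝕜 : Type*) [RCLike 𝕜] {M N P : Type*} [AddCommGroup M] [Module 𝕜 M]
    [AddCommGroup N] [Module 𝕜 N] [AddCommGroup P] [Module 𝕜 P]
    (τM : TopologicalSpace M) (τN : TopologicalSpace N) (τP : TopologicalSpace P)
    (S : Set (M → N → P)) : Prop :=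
  ∀ B : Set M, VNBdd 𝕜 τM B → FamBdd 𝕜 τN τP (⋃ h ∈ S, h '' B)

/-- `h` is a bounded `A`-linear map `M → L^b_A(N, P)`. -/
def IsCurriedBddAHom (𝕜 : Type*) [RCLike 𝕜] (A : Type*) [CommRing A] {M N P : Type*}
    [AddCommGroup M] [Module 𝕜 M] [Module A M]
    [AddCommGroup N] [Module 𝕜 N] [Module A N]
    [AddCommGroup P] [Module 𝕜 P] [Module A P]
    (τM : TopologicalSpace M) (τN : TopologicalSpace N) (τP : TopologicalSpace P)
    (h : M → N → P) : Prop :=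
  (∀ m m', h (m + m') = h m + h m') ∧
  (∀ (c : 𝕜) m, h (c • m) = c • h m) ∧
  (∀ (a : A) m, h (a • m) = a • h m) ∧
  (∀ m n n', h m (n + n') = h m n + h m n') ∧
  (∀ m (c : 𝕜) n, h m (c • n) = c • h m n) ∧
  (∀ m (a : A) n, h m (a • n) = a • h m n) ∧
  (∀ m, BddMap 𝕜 τN τP (h m)) ∧
  (∀ B : Set M, VNBdd 𝕜 τM B → FamBdd 𝕜 τN τP (h '' B))

/-! ### Auxiliary lemmas -/

open Bornology Filter

section Aux
variable {𝕜 : Type*} [RCLike 𝕜]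

section EF
variable {E F : Type*} [AddCommGroup E] [Module 𝕜 E] [AddCommGroup F] [Module 𝕜 F]

theorem st11_vnbdd_mono {τ : TopologicalSpace E} {s t : Set E} (h : s ⊆ t)
    (ht : VNBdd 𝕜 τ t) : VNBdd 𝕜 τ s := fun V hV => (ht V hV).mono_right h

theorem st11_vnbdd_iff {τ : TopologicalSpace E} {s : Set E} :
    VNBdd 𝕜 τ s ↔ @Bornology.IsVonNBounded 𝕜 E _ _ _ τ s := by
  letI := τ
  exact (isVonNBounded_iff (𝕜 := 𝕜) s).symm

theorem st11_absorbs_preimage {f : E → F} (hsmul : ∀ (c : 𝕜) x, f (c • x) = c • f x)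
    {U : Set F} {s : Set E} (h : Absorbs 𝕜 U (f '' s)) : Absorbs 𝕜 (f ⁻¹' U) s := by
  rcases absorbs_iff_norm.1 h with ⟨r, hr⟩
  refine absorbs_iff_norm.2 ⟨max r 1, fun c hc x hx => ?_⟩
  have hc1 : (1 : ℝ) ≤ ‖c‖ := le_trans (le_max_right _ _) hc
  have hc0 : c ≠ 0 := by
    intro h0; rw [h0, norm_zero] at hc1; linarith
  have hfx : f x ∈ c • U := hr c (le_trans (le_max_left _ _) hc) ⟨x, hx, rfl⟩
  rcases hfx with ⟨u, hu, hux⟩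
  refine ⟨c⁻¹ • x, ?_, by simp [smul_smul, hc0]⟩
  show f (c⁻¹ • x) ∈ U
  rw [hsmul, ← hux, smul_smul, inv_mul_cancel₀ hc0, one_smul]
  exact hu

theorem st11_absorbs_image {f : E → F} (hsmul : ∀ (c : 𝕜) x, f (c • x) = c • f x)
    {U : Set F} {s : Set E} (h : Absorbs 𝕜 (f ⁻¹' U) s) : Absorbs 𝕜 U (f '' s) := by
  refine h.eventually.mono fun c hc => ?_
  rintro _ ⟨x, hx, rfl⟩
  rcases hc hx with ⟨v, hv, rfl⟩
  exact ⟨f v, hv, (hsmul c v).symm⟩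

theorem st11_bddMap_of_cont {τE : TopologicalSpace E} {τF : TopologicalSpace F} {f : E → F}
    (hsmul : ∀ (c : 𝕜) x, f (c • x) = c • f x)
    (hcont : @Continuous E F τE τF f) : BddMap 𝕜 τE τF f := by
  intro s hs V hV
  have hf0 : f 0 = 0 := by
    have := hsmul 0 0; simpa using this
  have h1 : f ⁻¹' V ∈ @nhds E τE 0 := by
    have h2 := @Continuous.tendsto _ _ τE τF f hcont 0
    rw [hf0] at h2
    exact h2 hV
  exact st11_absorbs_image hsmul (hs _ h1)

theorem st11_vnbdd_singleton {τ : TopologicalSpace E} (h : @ContinuousSMul 𝕜 E _ _ τ)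
    (x : E) : VNBdd 𝕜 τ {x} := by
  letI := τ; haveI := h
  intro V hV
  exact (absorbent_nhds_zero hV).absorbs

theorem st11_vnbdd_inf {τ₁ τ₂ : TopologicalSpace E} {s : Set E}
    (h₁ : VNBdd 𝕜 τ₁ s) (h₂ : VNBdd 𝕜 τ₂ s) : VNBdd 𝕜 (τ₁ ⊓ τ₂) s := by
  intro V hV
  rw [@nhds_inf _ τ₁ τ₂ 0, Filter.mem_inf_iff] at hV
  rcases hV with ⟨V₁, hV₁, V₂, hV₂, rfl⟩
  rcases absorbs_iff_norm.1 (h₁ V₁ hV₁) with ⟨r₁, hr₁⟩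
  rcases absorbs_iff_norm.1 (h₂ V₂ hV₂) with ⟨r₂, hr₂⟩
  refine absorbs_iff_norm.2 ⟨max (max r₁ r₂) 1, fun c hc x hx => ?_⟩
  have hc1 : (1 : ℝ) ≤ ‖c‖ := le_trans (le_max_right _ _) hc
  have hc0 : c ≠ 0 := fun h0 => by rw [h0, norm_zero] at hc1; linarith
  rcases hr₁ c (le_trans ((le_max_left r₁ r₂).trans (le_max_left _ 1)) hc) hx with ⟨v₁, hv₁, hveq₁⟩
  rcases hr₂ c (le_trans ((le_max_right r₁ r₂).trans (le_max_left _ 1)) hc) hx with ⟨v₂, hv₂, hveq₂⟩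
  have : v₁ = v₂ := by
    have := hveq₁.trans hveq₂.symm
    exact smul_right_injective E hc0 this
  exact ⟨v₁, ⟨hv₁, this ▸ hv₂⟩, hveq₁⟩

end EF
end Aux
section Aux2
variable {𝕜 : Type*} [RCLike 𝕜]

section EF
variable {E F G : Type*} [AddCommGroup E] [Module 𝕜 E] [AddCommGroup F] [Module 𝕜 F]
  [AddCommGroup G] [Module 𝕜 G]

theorem st11_bddMap_comp {τE : TopologicalSpace E} {τF : TopologicalSpace F}
    {τG : TopologicalSpace G} {f : E → F} {g : F → G}
    (hf : BddMap 𝕜 τE τF f) (hg : BddMap 𝕜 τF τG g) : BddMap 𝕜 τE τG (g ∘ f) := by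
  intro s hs
  rw [Set.image_comp]
  exact hg _ (hf _ hs)

theorem st11_rcConvex_inter {s t : Set E} (hs : RCConvex 𝕜 s) (ht : RCConvex 𝕜 t) :
    RCConvex 𝕜 (s ∩ t) := fun x hx y hy a ha ha' =>
  ⟨hs hx.1 hy.1 a ha ha', ht hx.2 hy.2 a ha ha'⟩

theorem st11_rcConvex_preimage {f : E → F}
    (hadd : ∀ x y, f (x + y) = f x + f y) (hsmul : ∀ (c : 𝕜) x, f (c • x) = c • f x)
    {s : Set F} (hs : RCConvex 𝕜 s) : RCConvex 𝕜 (f ⁻¹' s) := by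
  intro x hx y hy a ha ha'
  show f _ ∈ s
  rw [hadd, hsmul, hsmul]
  exact hs hx hy a ha ha'

/-- A linear (as a function) map between explicit topologies: induced topology is LC. -/
theorem st11_isLC_induced {f : E → F}
    (hadd : ∀ x y, f (x + y) = f x + f y) (hsmul : ∀ (c : 𝕜) x, f (c • x) = c • f x)
    {τF : TopologicalSpace F} (hF : IsLCTop 𝕜 F τF) :
    IsLCTop 𝕜 E (τF.induced f) := by
  letI := τF
  haveI := hF.1.1; haveI := hF.1.2
  let fl : E →ₗ[𝕜] F := ⟨⟨f, hadd⟩, hsmul⟩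
  refine ⟨⟨?_, ?_⟩, ?_⟩
  · exact topologicalAddGroup_induced (fl.toAddMonoidHom)
  · exact continuousSMul_induced (R := 𝕜) (f := fl.toMulActionHom) (u := inferInstance)
  · intro U hU
    rw [@nhds_induced _ _ _ f 0] at hU
    rcases hU with ⟨W, hW, hWU⟩
    have hf0 : f 0 = 0 := by have := hsmul 0 0; simpa using this
    rw [hf0] at hW
    rcases hF.2 W hW with ⟨W', hW', hW'W, hconv⟩
    refine ⟨f ⁻¹' W', ?_, fun x hx => hWU (hW'W hx), st11_rcConvex_preimage hadd hsmul hconv⟩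
    rw [@nhds_induced _ _ _ f 0, hf0]
    exact Filter.preimage_mem_comap hW'

theorem st11_isLC_inf {τ₁ τ₂ : TopologicalSpace E}
    (h₁ : IsLCTop 𝕜 E τ₁) (h₂ : IsLCTop 𝕜 E τ₂) : IsLCTop 𝕜 E (τ₁ ⊓ τ₂) := by
  refine ⟨⟨?_, ?_⟩, ?_⟩
  · exact topologicalAddGroup_inf h₁.1.1 h₂.1.1
  · haveI := h₁.1.2; haveI := h₂.1.2
    exact continuousSMul_inf (M := 𝕜) (X := E) (t₁ := τ₁) (t₂ := τ₂)
  · intro U hU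
    rw [@nhds_inf _ τ₁ τ₂ 0, Filter.mem_inf_iff] at hU
    rcases hU with ⟨V₁, hV₁, V₂, hV₂, rfl⟩
    rcases h₁.2 V₁ hV₁ with ⟨W₁, hW₁, hW₁V, hc₁⟩
    rcases h₂.2 V₂ hV₂ with ⟨W₂, hW₂, hW₂V, hc₂⟩
    refine ⟨W₁ ∩ W₂, ?_, Set.inter_subset_inter hW₁V hW₂V, st11_rcConvex_inter hc₁ hc₂⟩
    rw [@nhds_inf _ τ₁ τ₂ 0, Filter.mem_inf_iff]
    exact ⟨W₁, hW₁, W₂, hW₂, rfl⟩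

end EF

section Prod
variable {E F : Type*} [AddCommGroup E] [Module 𝕜 E] [AddCommGroup F] [Module 𝕜 F]

theorem st11_vnbdd_prod {τE : TopologicalSpace E} {τF : TopologicalSpace F}
    {s : Set E} {t : Set F} (hs : VNBdd 𝕜 τE s) (ht : VNBdd 𝕜 τF t) :
    VNBdd 𝕜 (@instTopologicalSpaceProd E F τE τF) (s ×ˢ t) := by
  letI := τE; letI := τF
  intro V hV
  rcases mem_nhds_prod_iff.1 hV with ⟨U₁, hU₁, U₂, hU₂, hsub⟩
  refine ((hs U₁ hU₁).and (ht U₂ hU₂)).mono fun c hc => ?_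
  rintro ⟨x, y⟩ ⟨hx, hy⟩
  rcases hc.1 hx with ⟨u, hu, rfl⟩
  rcases hc.2 hy with ⟨v, hv, rfl⟩
  exact ⟨(u, v), hsub ⟨hu, hv⟩, rfl⟩

theorem st11_vnbdd_fst {τE : TopologicalSpace E} {τF : TopologicalSpace F}
    {B : Set (E × F)} (hB : VNBdd 𝕜 (@instTopologicalSpaceProd E F τE τF) B) :
    VNBdd 𝕜 τE (Prod.fst '' B) := by
  have : BddMap 𝕜 (@instTopologicalSpaceProd E F τE τF) τE (Prod.fst) :=
    st11_bddMap_of_cont (fun c x => rfl) (by letI := τE; letI := τF; exact continuous_fst)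
  exact this _ hB

theorem st11_vnbdd_snd {τE : TopologicalSpace E} {τF : TopologicalSpace F}
    {B : Set (E × F)} (hB : VNBdd 𝕜 (@instTopologicalSpaceProd E F τE τF) B) :
    VNBdd 𝕜 τF (Prod.snd '' B) := by
  have : BddMap 𝕜 (@instTopologicalSpaceProd E F τE τF) τF (Prod.snd) :=
    st11_bddMap_of_cont (fun c x => rfl) (by letI := τE; letI := τF; exact continuous_snd)
  exact this _ hB

theorem st11_subset_proj_prod (B : Set (E × F)) : B ⊆ (Prod.fst '' B) ×ˢ (Prod.snd '' B) :=
  fun p hp => ⟨⟨p, hp, rfl⟩, ⟨p, hp, rfl⟩⟩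

end Prod
end Aux2
section Aux3
variable {𝕜 : Type*} [RCLike 𝕜]
variable {M N P : Type*} [AddCommGroup M] [Module 𝕜 M] [AddCommGroup N] [Module 𝕜 N]
  [AddCommGroup P] [Module 𝕜 P]

/-- Maximality of the β tensor topology. -/
theorem st11_beta_le {τM : TopologicalSpace M} {τN : TopologicalSpace N}
    {τT : TopologicalSpace (TensorProduct 𝕜 M N)}
    (hτT : IsBetaTensorTop 𝕜 τM τN τT)
    {τ' : TopologicalSpace (TensorProduct 𝕜 M N)}
    (h1 : IsLCTop 𝕜 (TensorProduct 𝕜 M N) τ')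
    (h2 : BddMap 𝕜 (@instTopologicalSpaceProd M N τM τN) τ'
      (fun p : M × N => p.1 ⊗ₜ[𝕜] p.2)) : τT ≤ τ' := by
  have hle : τT ≤ τT ⊓ τ' := by
    refine hτT.2.2 (τT ⊓ τ') (st11_isLC_inf hτT.1 h1) ?_
    intro s hs
    exact st11_vnbdd_inf (hτT.2.1 s hs) (h2 s hs)
  exact le_trans hle inf_le_right

/-- Package a bilinear map as a linear map on the tensor product. -/
noncomputable def st11_lift (f : M × N → P) (hf : IsBilinMap 𝕜 f) :
    TensorProduct 𝕜 M N →ₗ[𝕜] P :=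
  TensorProduct.lift
    { toFun := fun m =>
        { toFun := fun n => f (m, n)
          map_add' := fun n n' => hf.2.2.1 m n n'
          map_smul' := fun c n => hf.2.2.2 c m n }
      map_add' := fun m m' => LinearMap.ext fun n => hf.1 m m' n
      map_smul' := fun c m => LinearMap.ext fun n => hf.2.1 c m n }

@[simp] theorem st11_lift_tmul (f : M × N → P) (hf : IsBilinMap 𝕜 f) (m : M) (n : N) :
    st11_lift f hf (m ⊗ₜ[𝕜] n) = f (m, n) := rfl

/-- A bounded bilinear map induces a continuous linear map on the β tensor product. -/
theorem st11_beta_lift_cont [TopologicalSpace M] [TopologicalSpace N] [TopologicalSpace P]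
    (hP : IsLCTop 𝕜 P inferInstance)
    {τT : TopologicalSpace (TensorProduct 𝕜 M N)}
    (hτT : IsBetaTensorTop 𝕜 inferInstance inferInstance τT)
    {f : M × N → P} (hf : IsBilinMap 𝕜 f)
    (hfb : BddMap 𝕜 (inferInstance : TopologicalSpace (M × N)) inferInstance f) :
    @Continuous _ _ τT inferInstance (st11_lift f hf) := by
  set φ := st11_lift f hf
  let τ' : TopologicalSpace (TensorProduct 𝕜 M N) :=
    TopologicalSpace.induced φ inferInstance
  have hLC : IsLCTop 𝕜 (TensorProduct 𝕜 M N) τ' :=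
    st11_isLC_induced (map_add φ) (map_smul φ) hP
  have hbdd : BddMap 𝕜 (inferInstance : TopologicalSpace (M × N)) τ'
      (fun p : M × N => p.1 ⊗ₜ[𝕜] p.2) := by
    intro s hs V hV
    rw [@nhds_induced _ _ _ φ 0] at hV
    rcases hV with ⟨W, hW, hWV⟩
    rw [map_zero] at hW
    refine Absorbs.mono_left ?_ hWV
    refine st11_absorbs_preimage (map_smul φ) ?_
    have himg : φ '' ((fun p : M × N => p.1 ⊗ₜ[𝕜] p.2) '' s) = f '' s := by
      rw [← Set.image_comp]
      congr 1
    rw [himg]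
    exact hfb s hs W hW
  have hle : τT ≤ τ' := st11_beta_le hτT hLC hbdd
  exact continuous_iff_le_induced.2 hle

/-- Image of a neighbourhood of zero under the quotient map is a neighbourhood of zero
in the coinduced topology. -/
theorem st11_mkQ_image_nhds {τT : TopologicalSpace (TensorProduct 𝕜 M N)}
    (hadd : @IsTopologicalAddGroup (TensorProduct 𝕜 M N) τT _)
    (J : Submodule 𝕜 (TensorProduct 𝕜 M N)) {W : Set (TensorProduct 𝕜 M N)}
    (hW : W ∈ @nhds _ τT 0) :
    J.mkQ '' W ∈ @nhds _ (τT.coinduced J.mkQ) 0 := by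
  letI := τT; haveI := hadd
  rcases mem_nhds_iff.1 hW with ⟨V₀, hV₀W, hV₀open, hV₀mem⟩
  have hpre : J.mkQ ⁻¹' (J.mkQ '' V₀) = V₀ + (J : Set (TensorProduct 𝕜 M N)) := by
    ext x
    constructor
    · rintro ⟨v, hv, hveq⟩
      have h1 : v - x ∈ J := (Submodule.Quotient.eq J).1 hveq
      have hmem : x - v ∈ J := by simpa [neg_sub] using J.neg_mem h1
      exact ⟨v, hv, x - v, hmem, by show v + (x - v) = x; rw [add_comm, sub_add_cancel]⟩
    · rintro ⟨v, hv, j, hj, rfl⟩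
      refine ⟨v, hv, ?_⟩
      show J.mkQ v = J.mkQ (v + j)
      have hz : J.mkQ j = 0 := (Submodule.Quotient.mk_eq_zero J).2 hj
      rw [map_add, hz, add_zero]
  have hopen : @IsOpen _ (τT.coinduced (J.mkQ : TensorProduct 𝕜 M N → TensorProduct 𝕜 M N ⧸ J)) (J.mkQ '' V₀) := by
    rw [isOpen_coinduced]
    show IsOpen (J.mkQ ⁻¹' (J.mkQ '' V₀))
    rw [hpre]
    exact hV₀open.add_right
  have h0 : (0 : TensorProduct 𝕜 M N ⧸ J) ∈ J.mkQ '' V₀ :=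
    ⟨0, hV₀mem, map_zero _⟩
  exact Filter.mem_of_superset (@IsOpen.mem_nhds _ _ _ _ hopen h0) (Set.image_mono hV₀W)

end Aux3
section Aux4
open UniformConvergence
variable {𝕜 : Type*} [RCLike 𝕜]
variable {M N P : Type*} [AddCommGroup M] [Module 𝕜 M] [TopologicalSpace M]
  [AddCommGroup N] [Module 𝕜 N] [TopologicalSpace N]
  [AddCommGroup P] [Module 𝕜 P] [TopologicalSpace P]

/-- Key equiboundedness lemma: if a family of linear functionals on the β tensor product is
uniformly bounded on sets `⊗(B)` for `B` bounded, then the sets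
`{x | ∀ φ ∈ 𝔉, φ x ∈ U}` are neighbourhoods of `0` for the β topology. -/
theorem st11_key (hM : IsLCTop 𝕜 M inferInstance) (hN : IsLCTop 𝕜 N inferInstance)
    (hP : IsLCTop 𝕜 P inferInstance)
    {τT : TopologicalSpace (TensorProduct 𝕜 M N)}
    (hτT : IsBetaTensorTop 𝕜 inferInstance inferInstance τT)
    (𝔉 : Set (TensorProduct 𝕜 M N →ₗ[𝕜] P))
    (hfam : ∀ B : Set (M × N), VNBdd 𝕜 inferInstance B →
      VNBdd 𝕜 (inferInstance : TopologicalSpace P)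
        (⋃ φ ∈ 𝔉, φ '' ((fun p : M × N => p.1 ⊗ₜ[𝕜] p.2) '' B)))
    {U : Set P} (hU : U ∈ nhds (0 : P)) :
    {x : TensorProduct 𝕜 M N | ∀ φ ∈ 𝔉, φ x ∈ U} ∈ @nhds _ τT 0 := by
  haveI hPg : IsTopologicalAddGroup P := hP.1.1
  haveI hPs : ContinuousSMul 𝕜 P := hP.1.2
  haveI hMs : ContinuousSMul 𝕜 M := hM.1.2
  haveI hNs : ContinuousSMul 𝕜 N := hN.1.2
  letI uP : UniformSpace P := IsTopologicalAddGroup.rightUniformSpace P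
  haveI : IsUniformAddGroup P := isUniformAddGroup_of_addCommGroup
  -- the linear map into the uniform-convergence space
  let Φ : TensorProduct 𝕜 M N →ₗ[𝕜] (↥𝔉 → P) :=
    { toFun := fun x => fun φ => (φ : TensorProduct 𝕜 M N →ₗ[𝕜] P) x
      map_add' := fun x y => by funext φ; simp
      map_smul' := fun c x => by funext φ; simp }
  -- pointwise boundedness
  have hpt : ∀ x : TensorProduct 𝕜 M N, IsVonNBounded 𝕜 (Set.range (Φ x)) := by
    intro x
    induction x using TensorProduct.induction_on with
    | zero =>
      have : Set.range (Φ 0) ⊆ {0} := by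
        rintro _ ⟨φ, rfl⟩; simp [Φ]
      exact (isVonNBounded_singleton (0 : P)).subset this
    | tmul m n =>
      have hB : VNBdd 𝕜 (inferInstance : TopologicalSpace (M × N)) {(m, n)} :=
        st11_vnbdd_singleton inferInstance (m, n)
      have hbd := hfam _ hB
      rw [st11_vnbdd_iff] at hbd
      refine hbd.subset ?_
      rintro _ ⟨φ, rfl⟩
      exact Set.mem_biUnion φ.2 ⟨m ⊗ₜ[𝕜] n, ⟨(m, n), rfl, rfl⟩, rfl⟩
    | add x y hx hy =>
      refine (hx.add hy).subset ?_
      rintro _ ⟨φ, rfl⟩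
      show Φ (x + y) φ ∈ _
      rw [map_add]
      exact Set.add_mem_add ⟨φ, rfl⟩ ⟨φ, rfl⟩
  -- the induced topology
  letI τ' : TopologicalSpace (TensorProduct 𝕜 M N) :=
    TopologicalSpace.induced (UniformFun.ofFun ∘ ⇑Φ) (UniformFun.topologicalSpace ↥𝔉 P)
  have hind : Topology.IsInducing (UniformFun.ofFun ∘ ⇑Φ) := ⟨rfl⟩
  haveI hτ'g : @IsTopologicalAddGroup (TensorProduct 𝕜 M N) τ' _ :=
    let ofFun' : (↥𝔉 → P) →+ (↥𝔉 →ᵤ P) := AddMonoidHom.id _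
    Topology.IsInducing.topologicalAddGroup (ofFun'.comp (Φ : TensorProduct 𝕜 M N →+ (↥𝔉 → P))) hind
  haveI hτ's : @ContinuousSMul 𝕜 (TensorProduct 𝕜 M N) _ _ τ' :=
    UniformFun.continuousSMul_induced_of_range_bounded 𝕜 ↥𝔉 P (TensorProduct 𝕜 M N) Φ hind hpt
  -- neighbourhood basis of τ' at 0
  have hb : (@nhds (TensorProduct 𝕜 M N) τ' 0).HasBasis (· ∈ nhds (0 : P))
      fun V => {x | ∀ φ : ↥𝔉, Φ x φ ∈ V} := by
    simp only [hind.nhds_eq_comap, Function.comp_apply, map_zero]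
    exact UniformFun.hasBasis_nhds_zero.comap _
  -- τ' is locally convex
  have hLC : IsLCTop 𝕜 (TensorProduct 𝕜 M N) τ' := by
    refine ⟨⟨hτ'g, hτ's⟩, ?_⟩
    intro W hW
    rcases hb.mem_iff.1 hW with ⟨V, hV, hVW⟩
    rcases hP.2 V hV with ⟨V', hV', hV'V, hconv⟩
    refine ⟨{x | ∀ φ : ↥𝔉, Φ x φ ∈ V'}, hb.mem_of_mem hV', fun x hx => hVW (fun φ => hV'V (hx φ)), ?_⟩
    intro x hx y hy t ht ht'
    intro φ
    have := hconv (hx φ) (hy φ) t ht ht'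
    simpa [map_add, map_smul] using this
  -- ⊗ is bounded with respect to τ'
  have hbdd : BddMap 𝕜 (inferInstance : TopologicalSpace (M × N)) τ'
      (fun p : M × N => p.1 ⊗ₜ[𝕜] p.2) := by
    intro B hB V hV
    rcases hb.mem_iff.1 hV with ⟨W, hW, hWV⟩
    refine Absorbs.mono_left ?_ hWV
    have hbd := hfam B hB W hW
    rcases absorbs_iff_norm.1 hbd with ⟨r, hr⟩
    refine absorbs_iff_norm.2 ⟨max r 1, fun c hc => ?_⟩
    have hc1 : (1 : ℝ) ≤ ‖c‖ := le_trans (le_max_right _ _) hc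
    have hc0 : c ≠ 0 := fun h0 => by rw [h0, norm_zero] at hc1; linarith
    rintro _ ⟨p, hp, rfl⟩
    refine ⟨c⁻¹ • (p.1 ⊗ₜ[𝕜] p.2), ?_, by simp [smul_smul, hc0]⟩
    intro φ
    show Φ (c⁻¹ • (p.1 ⊗ₜ[𝕜] p.2)) φ ∈ W
    have hmem : (φ : TensorProduct 𝕜 M N →ₗ[𝕜] P) (p.1 ⊗ₜ[𝕜] p.2) ∈ c • W := by
      refine hr c (le_trans (le_max_left _ _) hc) ?_
      exact Set.mem_biUnion φ.2 ⟨p.1 ⊗ₜ[𝕜] p.2, ⟨p, hp, rfl⟩, rfl⟩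
    rcases hmem with ⟨w, hw, hweq⟩
    have : Φ (c⁻¹ • (p.1 ⊗ₜ[𝕜] p.2)) φ = c⁻¹ • (φ : TensorProduct 𝕜 M N →ₗ[𝕜] P) (p.1 ⊗ₜ[𝕜] p.2) := by
      simp [Φ]
    rw [this, ← hweq, smul_smul, inv_mul_cancel₀ hc0, one_smul]
    exact hw
  -- maximality
  have hle : τT ≤ τ' := st11_beta_le hτT hLC hbdd
  have hmem : {x : TensorProduct 𝕜 M N | ∀ φ : ↥𝔉, Φ x φ ∈ U} ∈ @nhds _ τ' 0 :=
    hb.mem_of_mem hU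
  refine Filter.mem_of_superset (nhds_mono hle hmem) ?_
  intro x hx φ hφ
  exact hx ⟨φ, hφ⟩

end Aux4
section Aux5
variable {𝕜 : Type*} [RCLike 𝕜]
variable {A : Type*} [CommRing A] [Algebra 𝕜 A]
variable {M N P : Type*}
  [AddCommGroup M] [Module 𝕜 M] [Module A M] [TopologicalSpace M]
  [AddCommGroup N] [Module 𝕜 N] [Module A N] [TopologicalSpace N]
  [AddCommGroup P] [Module 𝕜 P] [Module A P] [TopologicalSpace P]

theorem st11_union_curry (f : M × N → P) (B : Set M) (s : Set N) :
    (⋃ φ ∈ Function.curry f '' B, φ '' s) = f '' (B ×ˢ s) := by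
  ext y
  simp only [Set.mem_iUnion, Set.mem_image, Set.mem_prod]
  constructor
  · rintro ⟨φ, ⟨⟨m, hm, rfl⟩, n, hn, rfl⟩⟩
    exact ⟨(m, n), ⟨hm, hn⟩, rfl⟩
  · rintro ⟨⟨m, n⟩, ⟨hm, hn⟩, rfl⟩
    exact ⟨Function.curry f m, ⟨⟨m, hm, rfl⟩, n, hn, rfl⟩⟩

theorem st11_curry_bijOn (hM : IsLCTop 𝕜 M inferInstance) :
    Set.BijOn (fun (f : M × N → P) => Function.curry f)
      {f | BddMap 𝕜 (inferInstance : TopologicalSpace (M × N)) (inferInstance) f ∧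
           IsBilinMap 𝕜 f ∧ IsABilinMap A f}
      {h | IsCurriedBddAHom 𝕜 A (inferInstance) (inferInstance) (inferInstance) h} := by
  haveI hMs : ContinuousSMul 𝕜 M := hM.1.2
  constructor
  · -- maps to
    rintro f ⟨hfb, hbil, habil⟩
    refine ⟨?_, ?_, ?_, ?_, ?_, ?_, ?_, ?_⟩
    · intro m m'; funext n; exact hbil.1 m m' n
    · intro c m; funext n; exact hbil.2.1 c m n
    · intro a m; funext n; exact habil.1 a m n
    · intro m n n'; exact hbil.2.2.1 m n n'
    · intro m c n; exact hbil.2.2.2 c m n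
    · intro m a n; exact habil.2 a m n
    · intro m s hs
      have him : Function.curry f m '' s = f '' ({m} ×ˢ s) := by
        ext y
        simp only [Set.mem_image, Set.mem_prod, Set.mem_singleton_iff]
        constructor
        · rintro ⟨n, hn, rfl⟩; exact ⟨(m, n), ⟨rfl, hn⟩, rfl⟩
        · rintro ⟨⟨m', n⟩, ⟨rfl, hn⟩, rfl⟩; exact ⟨n, hn, rfl⟩
      rw [him]
      exact hfb _ (st11_vnbdd_prod (st11_vnbdd_singleton inferInstance m) hs)
    · intro B hB s hs
      rw [st11_union_curry]
      exact hfb _ (st11_vnbdd_prod hB hs)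
  constructor
  · -- injective
    intro f _ f' _ hff
    funext p
    have := congrFun (congrFun hff p.1) p.2
    simpa using this
  · -- surjective
    rintro h ⟨hadd, hsmul, hasm, hadd2, hsmul2, hasm2, hbm, hfam⟩
    refine ⟨fun p => h p.1 p.2, ⟨?_, ⟨?_, ?_, ?_, ?_⟩, ?_, ?_⟩, rfl⟩
    · -- bounded
      intro B hB
      have hsub : (fun p : M × N => h p.1 p.2) '' B ⊆
          ⋃ φ ∈ h '' (Prod.fst '' B), φ '' (Prod.snd '' B) := by
        rintro _ ⟨⟨m, n⟩, hp, rfl⟩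
        exact Set.mem_biUnion ⟨m, ⟨(m, n), hp, rfl⟩, rfl⟩ ⟨n, ⟨(m, n), hp, rfl⟩, rfl⟩
      exact st11_vnbdd_mono hsub (hfam _ (st11_vnbdd_fst hB) _ (st11_vnbdd_snd hB))
    · intro m m' n; exact congrFun (hadd m m') n
    · intro c m n; exact congrFun (hsmul c m) n
    · intro m n n'; exact hadd2 m n n'
    · intro c m n; exact hsmul2 m c n
    · intro a m n; exact congrFun (hasm a m) n
    · intro a m n; exact hasm2 m a n

theorem st11_curry_famBdd (S : Set (M × N → P)) :
    (FamBdd 𝕜 (inferInstance : TopologicalSpace (M × N)) (inferInstance) S ↔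
     CurFamBdd 𝕜 (inferInstance) (inferInstance) (inferInstance)
       (Function.curry '' S)) := by
  constructor
  · intro hfb B hB s hs
    have heq : (⋃ φ ∈ ⋃ h ∈ Function.curry '' S, h '' B, φ '' s) =
        ⋃ f ∈ S, f '' (B ×ˢ s) := by
      ext y
      simp only [Set.mem_iUnion, Set.mem_image]
      constructor
      · rintro ⟨φ, ⟨⟨_, ⟨f, hf, rfl⟩, ⟨m, hm, rfl⟩⟩, n, hn, rfl⟩⟩
        exact ⟨f, hf, (m, n), ⟨hm, hn⟩, rfl⟩
      · rintro ⟨f, hf, ⟨m, n⟩, ⟨hm, hn⟩, rfl⟩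
        exact ⟨Function.curry f m, ⟨Function.curry f, ⟨f, hf, rfl⟩, ⟨m, hm, rfl⟩⟩, n, hn, rfl⟩
    rw [heq]
    exact hfb (B ×ˢ s) (st11_vnbdd_prod hB hs)
  · intro hcb B hB
    have hsub : (⋃ f ∈ S, f '' B) ⊆
        ⋃ φ ∈ ⋃ h ∈ Function.curry '' S, h '' (Prod.fst '' B), φ '' (Prod.snd '' B) := by
      intro y hy
      simp only [Set.mem_iUnion, Set.mem_image] at hy
      rcases hy with ⟨f, hf, ⟨m, n⟩, hp, rfl⟩
      have h1 : Function.curry f m ∈ ⋃ h ∈ Function.curry '' S, h '' (Prod.fst '' B) :=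
        Set.mem_biUnion ⟨f, hf, rfl⟩ ⟨m, ⟨(m, n), hp, rfl⟩, rfl⟩
      exact Set.mem_biUnion h1 ⟨n, ⟨(m, n), hp, rfl⟩, rfl⟩
    exact st11_vnbdd_mono hsub (hcb _ (st11_vnbdd_fst hB) _ (st11_vnbdd_snd hB))

end Aux5
section Aux6
variable {𝕜 : Type*} [RCLike 𝕜]
variable {A : Type*} [CommRing A] [Algebra 𝕜 A]
variable {M N P : Type*}
  [AddCommGroup M] [Module 𝕜 M] [Module A M] [TopologicalSpace M]
  [AddCommGroup N] [Module 𝕜 N] [Module A N] [TopologicalSpace N]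
  [AddCommGroup P] [Module 𝕜 P] [Module A P] [TopologicalSpace P]

theorem st11_swap_bddMap :
    BddMap 𝕜 (inferInstance : TopologicalSpace (N × M))
      (inferInstance : TopologicalSpace (M × N)) Prod.swap :=
  st11_bddMap_of_cont (fun _ _ => rfl) continuous_swap

theorem st11_image_swap_comp (f : M × N → P) (B : Set (N × M)) :
    (f ∘ Prod.swap) '' B = f '' (Prod.swap '' B) := Set.image_comp _ _ _

theorem st11_pred_swap {f : M × N → P}
    (h : f ∈ {f : M × N → P |
        BddMap 𝕜 (inferInstance : TopologicalSpace (M × N)) (inferInstance) f ∧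
        IsBilinMap 𝕜 f ∧ IsABilinMap A f}) :
    (f ∘ Prod.swap) ∈ {g : N × M → P |
        BddMap 𝕜 (inferInstance : TopologicalSpace (N × M)) (inferInstance) g ∧
        IsBilinMap 𝕜 g ∧ IsABilinMap A g} := by
  obtain ⟨hb, ⟨h1, h2, h3, h4⟩, ⟨h5, h6⟩⟩ := h
  refine ⟨st11_bddMap_comp st11_swap_bddMap hb, ⟨?_, ?_, ?_, ?_⟩, ?_, ?_⟩
  · intro n n' m; exact h3 m n n'
  · intro c n m; exact h4 c m n
  · intro n m m'; exact h1 m m' n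
  · intro c n m; exact h2 c m n
  · intro a n m; exact h6 a m n
  · intro a n m; exact h5 a m n

theorem st11_swap_bijOn (hN : IsLCTop 𝕜 N inferInstance) :
    Set.BijOn (fun (f : M × N → P) => (fun n m => f (m, n)))
      {f | BddMap 𝕜 (inferInstance : TopologicalSpace (M × N)) (inferInstance) f ∧
           IsBilinMap 𝕜 f ∧ IsABilinMap A f}
      {k | IsCurriedBddAHom 𝕜 A (inferInstance) (inferInstance) (inferInstance) k} := by
  have hcur := st11_curry_bijOn (𝕜 := 𝕜) (A := A) (M := N) (N := M) (P := P) hN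
  have hswap : Set.BijOn (fun (f : M × N → P) => f ∘ Prod.swap)
      {f | BddMap 𝕜 (inferInstance : TopologicalSpace (M × N)) (inferInstance) f ∧
           IsBilinMap 𝕜 f ∧ IsABilinMap A f}
      {g | BddMap 𝕜 (inferInstance : TopologicalSpace (N × M)) (inferInstance) g ∧
           IsBilinMap 𝕜 g ∧ IsABilinMap A g} := by
    refine ⟨fun f hf => st11_pred_swap hf, ?_, ?_⟩
    · intro f _ f' _ hff
      funext p
      have := congrFun hff p.swap
      simpa using this
    · intro g hg
      refine ⟨g ∘ Prod.swap, st11_pred_swap hg, ?_⟩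
      funext p; rfl
  exact hcur.comp hswap

theorem st11_swap_famBdd (S : Set (M × N → P)) :
    (FamBdd 𝕜 (inferInstance : TopologicalSpace (M × N)) (inferInstance) S ↔
     CurFamBdd 𝕜 (inferInstance) (inferInstance) (inferInstance)
       ((fun (f : M × N → P) => (fun n m => f (m, n))) '' S)) := by
  have key : ∀ S' : Set (N × M → P),
      FamBdd 𝕜 (inferInstance : TopologicalSpace (N × M)) (inferInstance) S' ↔
      CurFamBdd 𝕜 (inferInstance) (inferInstance) (inferInstance)
        (Function.curry '' S') := fun S' => st11_curry_famBdd S'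
  have himg : Function.curry '' ((fun (f : M × N → P) => f ∘ Prod.swap) '' S) =
      (fun (f : M × N → P) => (fun n m => f (m, n))) '' S := by
    rw [← Set.image_comp]
    rfl
  have hswapfam : FamBdd 𝕜 (inferInstance : TopologicalSpace (M × N)) (inferInstance) S ↔
      FamBdd 𝕜 (inferInstance : TopologicalSpace (N × M)) (inferInstance)
        ((fun (f : M × N → P) => f ∘ Prod.swap) '' S) := by
    constructor
    · intro h B hB
      have heq : (⋃ g ∈ (fun (f : M × N → P) => f ∘ Prod.swap) '' S, g '' B) =
          ⋃ f ∈ S, f '' (Prod.swap '' B) := by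
        ext y
        simp only [Set.mem_iUnion, Set.mem_image]
        constructor
        · rintro ⟨g, ⟨f, hf, rfl⟩, p, hp, rfl⟩
          exact ⟨f, hf, p.swap, ⟨p, hp, rfl⟩, rfl⟩
        · rintro ⟨f, hf, _, ⟨p, hp, rfl⟩, rfl⟩
          exact ⟨f ∘ Prod.swap, ⟨f, hf, rfl⟩, p, hp, rfl⟩
      rw [heq]
      exact h _ (st11_swap_bddMap _ hB)
    · intro h B hB
      have heq : (⋃ f ∈ S, f '' B) =
          ⋃ g ∈ (fun (f : M × N → P) => f ∘ Prod.swap) '' S, g '' (Prod.swap '' B) := by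
        ext y
        simp only [Set.mem_iUnion, Set.mem_image]
        constructor
        · rintro ⟨f, hf, p, hp, rfl⟩
          exact ⟨f ∘ Prod.swap, ⟨f, hf, rfl⟩, p.swap, ⟨p, hp, rfl⟩, by simp⟩
        · rintro ⟨g, ⟨f, hf, rfl⟩, _, ⟨p, hp, rfl⟩, rfl⟩
          exact ⟨f, hf, p, hp, by simp⟩
      rw [heq]
      have hBs : VNBdd 𝕜 (inferInstance : TopologicalSpace (N × M)) (Prod.swap '' B) := by
        have : BddMap 𝕜 (inferInstance : TopologicalSpace (M × N))
            (inferInstance : TopologicalSpace (N × M)) Prod.swap :=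
          st11_bddMap_of_cont (fun _ _ => rfl) continuous_swap
        exact this _ hB
      exact h _ hBs
  rw [hswapfam, key, himg]

end Aux6
section Aux7
variable {𝕜 : Type*} [RCLike 𝕜]
variable {A : Type*} [CommRing A] [Algebra 𝕜 A]
variable {M N P : Type*}
  [AddCommGroup M] [Module 𝕜 M] [Module A M] [TopologicalSpace M]
  [AddCommGroup N] [Module 𝕜 N] [Module A N] [TopologicalSpace N]
  [AddCommGroup P] [Module 𝕜 P] [Module A P] [TopologicalSpace P]

theorem st11_mkQ_rel {τT : TopologicalSpace (TensorProduct 𝕜 M N)}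
    (J : Submodule 𝕜 (TensorProduct 𝕜 M N))
    (hJ : (J : Set (TensorProduct 𝕜 M N)) = @closure _ τT (balancedRelComm 𝕜 A M N))
    (a : A) (m : M) (n : N) :
    J.mkQ ((a • m) ⊗ₜ[𝕜] n) = J.mkQ (m ⊗ₜ[𝕜] (a • n)) := by
  have hgen : (a • m) ⊗ₜ[𝕜] n - m ⊗ₜ[𝕜] (a • n) ∈ balancedRelComm 𝕜 A M N :=
    Submodule.subset_span ⟨a, m, n, rfl⟩
  have hmem : (a • m) ⊗ₜ[𝕜] n - m ⊗ₜ[𝕜] (a • n) ∈ J := by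
    rw [← SetLike.mem_coe, hJ]
    have hgen' : (a • m) ⊗ₜ[𝕜] n - m ⊗ₜ[𝕜] (a • n) ∈
        (balancedRelComm 𝕜 A M N : Set (TensorProduct 𝕜 M N)) := hgen
    exact (@subset_closure _ τT ((balancedRelComm 𝕜 A M N : Set (TensorProduct 𝕜 M N)))) hgen'
  exact (Submodule.Quotient.eq J).2 hmem

theorem st11_mkQ_bdd {τT : TopologicalSpace (TensorProduct 𝕜 M N)}
    (J : Submodule 𝕜 (TensorProduct 𝕜 M N)) :
    BddMap 𝕜 τT (τT.coinduced J.mkQ) (J.mkQ : TensorProduct 𝕜 M N → TensorProduct 𝕜 M N ⧸ J) :=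
  st11_bddMap_of_cont (fun c x => map_smul J.mkQ c x) continuous_coinduced_rng

/-- Part 1: the bijection. -/
theorem st11_part1_bijOn (hM : IsLCTop 𝕜 M inferInstance) (hN : IsLCTop 𝕜 N inferInstance)
    (hP : IsLCTop 𝕜 P inferInstance) [T2Space P]
    {τT : TopologicalSpace (TensorProduct 𝕜 M N)}
    (hτT : IsBetaTensorTop 𝕜 inferInstance inferInstance τT)
    (J : Submodule 𝕜 (TensorProduct 𝕜 M N))
    (hJ : (J : Set (TensorProduct 𝕜 M N)) = @closure _ τT (balancedRelComm 𝕜 A M N)) :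
    Set.BijOn (fun (g : TensorProduct 𝕜 M N ⧸ J →ₗ[𝕜] P) =>
        (fun p : M × N => g (J.mkQ (p.1 ⊗ₜ[𝕜] p.2))))
      {g | BddMap 𝕜 (τT.coinduced J.mkQ) (inferInstance) ⇑g ∧
           ∀ (a : A) (m : M) (n : N),
             g (J.mkQ ((a • m) ⊗ₜ[𝕜] n)) = a • g (J.mkQ (m ⊗ₜ[𝕜] n))}
      {f | BddMap 𝕜 (inferInstance : TopologicalSpace (M × N)) (inferInstance) f ∧
           IsBilinMap 𝕜 f ∧ IsABilinMap A f} := by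
  constructor
  · rintro g ⟨hgb, hgA⟩
    refine ⟨?_, ⟨?_, ?_, ?_, ?_⟩, ?_, ?_⟩
    · -- bounded
      have : BddMap 𝕜 (inferInstance : TopologicalSpace (M × N)) (inferInstance)
          (⇑g ∘ ((J.mkQ : TensorProduct 𝕜 M N → TensorProduct 𝕜 M N ⧸ J) ∘
            (fun p : M × N => p.1 ⊗ₜ[𝕜] p.2))) :=
        st11_bddMap_comp (st11_bddMap_comp hτT.2.1 (st11_mkQ_bdd J)) hgb
      exact this
    · intro m m' n; simp [TensorProduct.add_tmul]
    · intro c m n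
      show g (J.mkQ ((c • m) ⊗ₜ[𝕜] n)) = c • g (J.mkQ (m ⊗ₜ[𝕜] n))
      rw [show (c • m) ⊗ₜ[𝕜] n = c • (m ⊗ₜ[𝕜] n) from TensorProduct.smul_tmul' c m n,
        map_smul, map_smul]
    · intro m n n'; simp [TensorProduct.tmul_add]
    · intro c m n
      show g (J.mkQ (m ⊗ₜ[𝕜] (c • n))) = c • g (J.mkQ (m ⊗ₜ[𝕜] n))
      rw [show m ⊗ₜ[𝕜] (c • n) = c • (m ⊗ₜ[𝕜] n) from (TensorProduct.tmul_smul c m n),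
        map_smul, map_smul]
    · intro a m n; exact hgA a m n
    · intro a m n
      show g (J.mkQ (m ⊗ₜ[𝕜] (a • n))) = a • g (J.mkQ (m ⊗ₜ[𝕜] n))
      rw [← st11_mkQ_rel (τT := τT) J hJ a m n]
      exact hgA a m n
  constructor
  · intro g₁ _ g₂ _ hff
    exact Submodule.linearMap_qext _ (TensorProduct.ext' fun m n => congrFun hff (m, n))
  · rintro f ⟨hfb, hbil, habil⟩
    set φ := st11_lift f hbil with hφ
    have hφc : @Continuous _ _ τT inferInstance φ := st11_beta_lift_cont hP hτT hbil hfb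
    have hker : J ≤ LinearMap.ker φ := by
      intro x hx
      have hxc : x ∈ @closure _ τT (balancedRelComm 𝕜 A M N) := by
        rw [← hJ]; exact hx
      have hclosed : @IsClosed _ τT (⇑φ ⁻¹' {(0 : P)}) := by
        letI := τT
        exact (isClosed_singleton).preimage hφc
      have hsub : (balancedRelComm 𝕜 A M N : Set (TensorProduct 𝕜 M N)) ⊆ ⇑φ ⁻¹' {0} := by
        intro y hy
        have : balancedRelComm 𝕜 A M N ≤ LinearMap.ker φ := by
          rw [balancedRelComm, Submodule.span_le]
          rintro _ ⟨a, m, n, rfl⟩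
          simp only [SetLike.mem_coe, LinearMap.mem_ker, map_sub]
          rw [hφ, st11_lift_tmul, st11_lift_tmul, habil.1 a m n, habil.2 a m n, sub_self]
        exact this hy
      have h2 := @closure_minimal _ τT _ _ hsub hclosed
      have h3 := h2 hxc
      simpa using h3
    refine ⟨J.liftQ φ hker, ⟨?_, ?_⟩, ?_⟩
    · -- bounded
      have hcomp : (⇑(J.liftQ φ hker) ∘ ⇑J.mkQ) = ⇑φ := by
        funext x; rfl
      have hcont : @Continuous _ _ (τT.coinduced J.mkQ) inferInstance ⇑(J.liftQ φ hker) := by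
        rw [continuous_coinduced_dom, hcomp]
        exact hφc
      exact st11_bddMap_of_cont (map_smul _) hcont
    · intro a m n
      show φ ((a • m) ⊗ₜ[𝕜] n) = a • φ (m ⊗ₜ[𝕜] n)
      rw [hφ, st11_lift_tmul, st11_lift_tmul]
      exact habil.1 a m n
    · funext p
      show φ (p.1 ⊗ₜ[𝕜] p.2) = f p
      rw [hφ, st11_lift_tmul]

/-- Part 1: equiboundedness of families. -/
theorem st11_part1_famBdd (hM : IsLCTop 𝕜 M inferInstance) (hN : IsLCTop 𝕜 N inferInstance)
    (hP : IsLCTop 𝕜 P inferInstance)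
    {τT : TopologicalSpace (TensorProduct 𝕜 M N)}
    (hτT : IsBetaTensorTop 𝕜 inferInstance inferInstance τT)
    (J : Submodule 𝕜 (TensorProduct 𝕜 M N))
    (S : Set (TensorProduct 𝕜 M N ⧸ J →ₗ[𝕜] P)) :
    (FamBdd 𝕜 (τT.coinduced J.mkQ) (inferInstance)
        ((fun g : TensorProduct 𝕜 M N ⧸ J →ₗ[𝕜] P =>
          (g : TensorProduct 𝕜 M N ⧸ J → P)) '' S) ↔
     FamBdd 𝕜 (inferInstance : TopologicalSpace (M × N)) (inferInstance)
        ((fun (g : TensorProduct 𝕜 M N ⧸ J →ₗ[𝕜] P) =>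
          (fun p : M × N => g (J.mkQ (p.1 ⊗ₜ[𝕜] p.2)))) '' S)) := by
  have heq : ∀ B : Set (M × N),
      (⋃ u ∈ (fun (g : TensorProduct 𝕜 M N ⧸ J →ₗ[𝕜] P) =>
          (fun p : M × N => g (J.mkQ (p.1 ⊗ₜ[𝕜] p.2)))) '' S, u '' B) =
      ⋃ φ ∈ (fun g : TensorProduct 𝕜 M N ⧸ J →ₗ[𝕜] P =>
          (g : TensorProduct 𝕜 M N ⧸ J → P)) '' S,
        φ '' ((J.mkQ : TensorProduct 𝕜 M N → TensorProduct 𝕜 M N ⧸ J) ''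
          ((fun p : M × N => p.1 ⊗ₜ[𝕜] p.2) '' B)) := by
    intro B
    ext y
    simp only [Set.mem_iUnion, Set.mem_image]
    constructor
    · rintro ⟨u, ⟨g, hg, rfl⟩, p, hp, rfl⟩
      exact ⟨⇑g, ⟨g, hg, rfl⟩, J.mkQ (p.1 ⊗ₜ[𝕜] p.2), ⟨p.1 ⊗ₜ[𝕜] p.2, ⟨p, hp, rfl⟩, rfl⟩, rfl⟩
    · rintro ⟨u, ⟨g, hg, rfl⟩, _, ⟨_, ⟨p, hp, rfl⟩, rfl⟩, rfl⟩
      exact ⟨_, ⟨g, hg, rfl⟩, p, hp, rfl⟩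
  constructor
  · intro hFB B hB
    rw [heq B]
    exact hFB _ (st11_mkQ_bdd J _ (hτT.2.1 _ hB))
  · intro hFB s hs U hU
    set 𝔉 : Set (TensorProduct 𝕜 M N →ₗ[𝕜] P) :=
      (fun g : TensorProduct 𝕜 M N ⧸ J →ₗ[𝕜] P => g ∘ₗ J.mkQ) '' S with h𝔉
    have hfam : ∀ B : Set (M × N), VNBdd 𝕜 inferInstance B →
        VNBdd 𝕜 (inferInstance : TopologicalSpace P)
          (⋃ φ ∈ 𝔉, φ '' ((fun p : M × N => p.1 ⊗ₜ[𝕜] p.2) '' B)) := by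
      intro B hB
      have heq2 : (⋃ φ ∈ 𝔉, φ '' ((fun p : M × N => p.1 ⊗ₜ[𝕜] p.2) '' B)) =
          ⋃ u ∈ (fun (g : TensorProduct 𝕜 M N ⧸ J →ₗ[𝕜] P) =>
            (fun p : M × N => g (J.mkQ (p.1 ⊗ₜ[𝕜] p.2)))) '' S, u '' B := by
        ext y
        simp only [Set.mem_iUnion, Set.mem_image, h𝔉]
        constructor
        · rintro ⟨φ, ⟨g, hg, rfl⟩, _, ⟨p, hp, rfl⟩, rfl⟩
          exact ⟨_, ⟨g, hg, rfl⟩, p, hp, rfl⟩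
        · rintro ⟨u, ⟨g, hg, rfl⟩, p, hp, rfl⟩
          exact ⟨g ∘ₗ J.mkQ, ⟨g, hg, rfl⟩, p.1 ⊗ₜ[𝕜] p.2, ⟨p, hp, rfl⟩, rfl⟩
      rw [heq2]
      exact hFB B hB
    have hW := st11_key hM hN hP hτT 𝔉 hfam hU
    have hWQ : (J.mkQ '' {x : TensorProduct 𝕜 M N | ∀ φ ∈ 𝔉, φ x ∈ U}) ∈
        @nhds _ (τT.coinduced J.mkQ) 0 :=
      st11_mkQ_image_nhds hτT.1.1.1 J hW
    refine (hs _ hWQ).eventually.mono fun c hc => ?_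
    intro y hy
    simp only [Set.mem_iUnion, Set.mem_image] at hy
    rcases hy with ⟨u, ⟨g, hgS, rfl⟩, x, hx, rfl⟩
    rcases hc hx with ⟨q, hq, rfl⟩
    rcases hq with ⟨w, hw, rfl⟩
    refine ⟨g (J.mkQ w), ?_, by rw [map_smul]⟩
    exact hw (g ∘ₗ J.mkQ) ⟨g, hgS, rfl⟩

end Aux7
section Aux8
variable {𝕜 : Type*} [RCLike 𝕜]
variable {A : Type*} [CommRing A] [Algebra 𝕜 A]
variable {M N P : Type*}
  [AddCommGroup M] [Module 𝕜 M] [Module A M] [TopologicalSpace M]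
  [AddCommGroup N] [Module 𝕜 N] [Module A N] [TopologicalSpace N]
  [AddCommGroup P] [Module 𝕜 P] [Module A P] [TopologicalSpace P]

/-- Part 4: the continuous (projective) case. -/
theorem st11_part4_bijOn (hP : IsLCTop 𝕜 P inferInstance) [T2Space P]
    {τTπ : TopologicalSpace (TensorProduct 𝕜 M N)}
    (hτTπ : IsProjTensorTop 𝕜 inferInstance inferInstance τTπ)
    (Jπ : Submodule 𝕜 (TensorProduct 𝕜 M N))
    (hJπ : (Jπ : Set (TensorProduct 𝕜 M N)) = @closure _ τTπ (balancedRelComm 𝕜 A M N))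
    (τQπ : TopologicalSpace (TensorProduct 𝕜 M N ⧸ Jπ)) (hτQπ : τQπ = τTπ.coinduced Jπ.mkQ) :
    Set.BijOn (fun (g : TensorProduct 𝕜 M N ⧸ Jπ →ₗ[𝕜] P) =>
        (fun p : M × N => g (Jπ.mkQ (p.1 ⊗ₜ[𝕜] p.2))))
      {g | @Continuous _ _ τQπ (inferInstance) ⇑g ∧
           ∀ (a : A) (m : M) (n : N),
             g (Jπ.mkQ ((a • m) ⊗ₜ[𝕜] n)) = a • g (Jπ.mkQ (m ⊗ₜ[𝕜] n))}
      {f | Continuous f ∧ IsBilinMap 𝕜 f ∧ IsABilinMap A f} := by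
  subst hτQπ
  constructor
  · rintro g ⟨hgc, hgA⟩
    refine ⟨?_, ⟨?_, ?_, ?_, ?_⟩, ?_, ?_⟩
    · -- continuous
      have h1 : @Continuous _ _ τTπ (τTπ.coinduced Jπ.mkQ)
          (Jπ.mkQ : TensorProduct 𝕜 M N → TensorProduct 𝕜 M N ⧸ Jπ) :=
        continuous_coinduced_rng
      have h2 : @Continuous (M × N) _ inferInstance (τTπ.coinduced Jπ.mkQ)
          (fun p : M × N => Jπ.mkQ (p.1 ⊗ₜ[𝕜] p.2)) := h1.comp hτTπ.2.1
      exact hgc.comp h2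
    · intro m m' n; simp [TensorProduct.add_tmul]
    · intro c m n
      show g (Jπ.mkQ ((c • m) ⊗ₜ[𝕜] n)) = c • g (Jπ.mkQ (m ⊗ₜ[𝕜] n))
      rw [show (c • m) ⊗ₜ[𝕜] n = c • (m ⊗ₜ[𝕜] n) from TensorProduct.smul_tmul' c m n,
        map_smul, map_smul]
    · intro m n n'; simp [TensorProduct.tmul_add]
    · intro c m n
      show g (Jπ.mkQ (m ⊗ₜ[𝕜] (c • n))) = c • g (Jπ.mkQ (m ⊗ₜ[𝕜] n))
      rw [show m ⊗ₜ[𝕜] (c • n) = c • (m ⊗ₜ[𝕜] n) from (TensorProduct.tmul_smul c m n),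
        map_smul, map_smul]
    · intro a m n; exact hgA a m n
    · intro a m n
      show g (Jπ.mkQ (m ⊗ₜ[𝕜] (a • n))) = a • g (Jπ.mkQ (m ⊗ₜ[𝕜] n))
      rw [← st11_mkQ_rel (τT := τTπ) Jπ hJπ a m n]
      exact hgA a m n
  constructor
  · intro g₁ _ g₂ _ hff
    exact Submodule.linearMap_qext _ (TensorProduct.ext' fun m n => congrFun hff (m, n))
  · rintro f ⟨hfc, hbil, habil⟩
    set φ := st11_lift f hbil with hφ
    have hφc : @Continuous _ _ τTπ inferInstance φ := by
      have hLC : IsLCTop 𝕜 (TensorProduct 𝕜 M N)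
          (TopologicalSpace.induced ⇑φ inferInstance) :=
        st11_isLC_induced (map_add φ) (map_smul φ) hP
      have hcont : @Continuous (M × N) _ inferInstance
          (TopologicalSpace.induced ⇑φ inferInstance)
          (fun p : M × N => p.1 ⊗ₜ[𝕜] p.2) := by
        rw [continuous_induced_rng]
        exact hfc
      have hle := hτTπ.2.2 _ hLC hcont
      exact continuous_iff_le_induced.2 hle
    have hker : Jπ ≤ LinearMap.ker φ := by
      intro x hx
      have hxc : x ∈ @closure _ τTπ (balancedRelComm 𝕜 A M N) := by
        rw [← hJπ]; exact hx
      have hclosed : @IsClosed _ τTπ (⇑φ ⁻¹' {(0 : P)}) := by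
        letI := τTπ
        exact (isClosed_singleton).preimage hφc
      have hsub : (balancedRelComm 𝕜 A M N : Set (TensorProduct 𝕜 M N)) ⊆ ⇑φ ⁻¹' {0} := by
        intro y hy
        have : balancedRelComm 𝕜 A M N ≤ LinearMap.ker φ := by
          rw [balancedRelComm, Submodule.span_le]
          rintro _ ⟨a, m, n, rfl⟩
          simp only [SetLike.mem_coe, LinearMap.mem_ker, map_sub]
          rw [hφ, st11_lift_tmul, st11_lift_tmul, habil.1 a m n, habil.2 a m n, sub_self]
        exact this hy
      have h2 := @closure_minimal _ τTπ _ _ hsub hclosed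
      have h3 := h2 hxc
      simpa using h3
    refine ⟨Jπ.liftQ φ hker, ⟨?_, ?_⟩, ?_⟩
    · have hcomp : (⇑(Jπ.liftQ φ hker) ∘ ⇑Jπ.mkQ) = ⇑φ := by funext x; rfl
      rw [continuous_coinduced_dom, hcomp]
      exact hφc
    · intro a m n
      show φ ((a • m) ⊗ₜ[𝕜] n) = a • φ (m ⊗ₜ[𝕜] n)
      rw [hφ, st11_lift_tmul, st11_lift_tmul]
      exact habil.1 a m n
    · funext p
      show φ (p.1 ⊗ₜ[𝕜] p.2) = f p
      rw [hφ, st11_lift_tmul]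

end Aux8
theorem statement11 {𝕜 : Type*} [RCLike 𝕜]
    -- A, a commutative bounded algebra
    (A : Type*) [CommRing A] [Algebra 𝕜 A] [TopologicalSpace A] [T2Space A]
    (hA : IsLCTop 𝕜 A (inferInstance))
    (hAmul : BddMap 𝕜 (inferInstance : TopologicalSpace (A × A)) (inferInstance)
      (fun p : A × A => p.1 * p.2))
    -- M, N, P bounded A-modules
    (M : Type*) [AddCommGroup M] [Module 𝕜 M] [Module A M] [IsScalarTower 𝕜 A M]
    [TopologicalSpace M] [T2Space M] (hM : IsLCTop 𝕜 M (inferInstance))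
    (hMmod : BddMap 𝕜 (inferInstance : TopologicalSpace (A × M)) (inferInstance)
      (fun p : A × M => p.1 • p.2))
    (N : Type*) [AddCommGroup N] [Module 𝕜 N] [Module A N] [IsScalarTower 𝕜 A N]
    [TopologicalSpace N] [T2Space N] (hN : IsLCTop 𝕜 N (inferInstance))
    (hNmod : BddMap 𝕜 (inferInstance : TopologicalSpace (A × N)) (inferInstance)
      (fun p : A × N => p.1 • p.2))
    (P : Type*) [AddCommGroup P] [Module 𝕜 P] [Module A P] [IsScalarTower 𝕜 A P]
    [TopologicalSpace P] [T2Space P] (hP : IsLCTop 𝕜 P (inferInstance))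
    (hPmod : BddMap 𝕜 (inferInstance : TopologicalSpace (A × P)) (inferInstance)
      (fun p : A × P => p.1 • p.2))
    -- the bornological tensor product M ⊗_A^β N
    (τT : TopologicalSpace (TensorProduct 𝕜 M N))
    (hτT : IsBetaTensorTop 𝕜 (inferInstance) (inferInstance) τT)
    (J : Submodule 𝕜 (TensorProduct 𝕜 M N))
    (hJ : (J : Set (TensorProduct 𝕜 M N)) = @closure _ τT (balancedRelComm 𝕜 A M N)) :
    ∀ τQ : TopologicalSpace (TensorProduct 𝕜 M N ⧸ J), τQ = τT.coinduced J.mkQ →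
    -- L^b_A(M ⊗_A^β N, P) ≅ L^b_A(M, N; P) bornologically
    ((Set.BijOn (fun (g : TensorProduct 𝕜 M N ⧸ J →ₗ[𝕜] P) =>
          (fun p : M × N => g (J.mkQ (p.1 ⊗ₜ[𝕜] p.2))))
        {g | BddMap 𝕜 τQ (inferInstance) ⇑g ∧
             ∀ (a : A) (m : M) (n : N),
               g (J.mkQ ((a • m) ⊗ₜ[𝕜] n)) = a • g (J.mkQ (m ⊗ₜ[𝕜] n))}
        {f | BddMap 𝕜 (inferInstance : TopologicalSpace (M × N)) (inferInstance) f ∧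
             IsBilinMap 𝕜 f ∧ IsABilinMap A f} ∧
      ∀ S : Set (TensorProduct 𝕜 M N ⧸ J →ₗ[𝕜] P),
        S ⊆ {g | BddMap 𝕜 τQ (inferInstance) ⇑g ∧
             ∀ (a : A) (m : M) (n : N),
               g (J.mkQ ((a • m) ⊗ₜ[𝕜] n)) = a • g (J.mkQ (m ⊗ₜ[𝕜] n))} →
        (FamBdd 𝕜 τQ (inferInstance)
            ((fun g : TensorProduct 𝕜 M N ⧸ J →ₗ[𝕜] P =>
              (g : TensorProduct 𝕜 M N ⧸ J → P)) '' S) ↔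
         FamBdd 𝕜 (inferInstance : TopologicalSpace (M × N)) (inferInstance)
            ((fun (g : TensorProduct 𝕜 M N ⧸ J →ₗ[𝕜] P) =>
              (fun p : M × N => g (J.mkQ (p.1 ⊗ₜ[𝕜] p.2)))) '' S)))) ∧
    -- L^b_A(M, N; P) ≅ L^b_A(M, L^b_A(N, P)) bornologically
    ((Set.BijOn (fun (f : M × N → P) => Function.curry f)
        {f | BddMap 𝕜 (inferInstance : TopologicalSpace (M × N)) (inferInstance) f ∧
             IsBilinMap 𝕜 f ∧ IsABilinMap A f}
        {h | IsCurriedBddAHom 𝕜 A (inferInstance) (inferInstance) (inferInstance) h} ∧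
      ∀ S : Set (M × N → P),
        S ⊆ {f | BddMap 𝕜 (inferInstance : TopologicalSpace (M × N)) (inferInstance) f ∧
             IsBilinMap 𝕜 f ∧ IsABilinMap A f} →
        (FamBdd 𝕜 (inferInstance : TopologicalSpace (M × N)) (inferInstance) S ↔
         CurFamBdd 𝕜 (inferInstance) (inferInstance) (inferInstance)
           (Function.curry '' S)))) ∧
    -- L^b_A(M, N; P) ≅ L^b_A(N, L^b_A(M, P)) bornologically
    ((Set.BijOn (fun (f : M × N → P) => (fun n m => f (m, n)))
        {f | BddMap 𝕜 (inferInstance : TopologicalSpace (M × N)) (inferInstance) f ∧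
             IsBilinMap 𝕜 f ∧ IsABilinMap A f}
        {k | IsCurriedBddAHom 𝕜 A (inferInstance) (inferInstance) (inferInstance) k} ∧
      ∀ S : Set (M × N → P),
        S ⊆ {f | BddMap 𝕜 (inferInstance : TopologicalSpace (M × N)) (inferInstance) f ∧
             IsBilinMap 𝕜 f ∧ IsABilinMap A f} →
        (FamBdd 𝕜 (inferInstance : TopologicalSpace (M × N)) (inferInstance) S ↔
         CurFamBdd 𝕜 (inferInstance) (inferInstance) (inferInstance)
           ((fun (f : M × N → P) => (fun n m => f (m, n))) '' S)))) ∧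
    -- locally convex case: algebraic isomorphism L^c_A(M,N;P) ≅ L^c_A(M ⊗_A^π N, P)
    (∀ (_ : Continuous fun p : A × A => p.1 * p.2)
       (_ : Continuous fun p : A × M => p.1 • p.2)
       (_ : Continuous fun p : A × N => p.1 • p.2)
       (_ : Continuous fun p : A × P => p.1 • p.2)
       (τTπ : TopologicalSpace (TensorProduct 𝕜 M N))
       (_ : IsProjTensorTop 𝕜 (inferInstance) (inferInstance) τTπ)
       (Jπ : Submodule 𝕜 (TensorProduct 𝕜 M N))
       (_ : (Jπ : Set (TensorProduct 𝕜 M N)) = @closure _ τTπ (balancedRelComm 𝕜 A M N))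
       (τQπ : TopologicalSpace (TensorProduct 𝕜 M N ⧸ Jπ)), τQπ = τTπ.coinduced Jπ.mkQ →
      Set.BijOn (fun (g : TensorProduct 𝕜 M N ⧸ Jπ →ₗ[𝕜] P) =>
          (fun p : M × N => g (Jπ.mkQ (p.1 ⊗ₜ[𝕜] p.2))))
        {g | @Continuous _ _ τQπ (inferInstance) ⇑g ∧
             ∀ (a : A) (m : M) (n : N),
               g (Jπ.mkQ ((a • m) ⊗ₜ[𝕜] n)) = a • g (Jπ.mkQ (m ⊗ₜ[𝕜] n))}
        {f | Continuous f ∧ IsBilinMap 𝕜 f ∧ IsABilinMap A f}) := by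
  intro τQ hτQ
  subst hτQ
  refine ⟨⟨?_, ?_⟩, ⟨?_, ?_⟩, ⟨?_, ?_⟩, ?_⟩
  · exact st11_part1_bijOn hM hN hP hτT J hJ
  · intro S _
    exact st11_part1_famBdd hM hN hP hτT J S
  · exact st11_curry_bijOn hM
  · intro S _
    exact st11_curry_famBdd S
  · exact st11_swap_bijOn hN
  · intro S _
    exact st11_swap_famBdd S
  · intro _ _ _ _ τTπ hτTπ Jπ hJπ τQπ hτQπ
    exact st11_part4_bijOn hP hτTπ Jπ hJπ τQπ hτQπ
end

section
/- Let E, F and G be locally convex spaces. A bilinear mapping E × F → G is bounded if and only if the associated linear mapping E ⊗_β F → G is bounded; more precisely, the transpose of the canonical bilinear map ⊗ : E × F → E ⊗_β F and the exponential law give bornological isomorphisms L^b(E ⊗_β F, G) ≅ L^b(E, F; G) ≅ L^b(E, L^b(F, G)). -/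
/-!
STATEMENT 18: a bilinear map `E × F → G` between locally convex spaces is bounded
iff the associated linear map `E ⊗_β F → G` is bounded; the transpose of `⊗` and
the exponential law give bornological isomorphisms
`L^b(E ⊗_β F, G) ≅ L^b(E, F; G) ≅ L^b(E, L^b(F, G))` (all spaces carrying the
bornology of the topology of uniform convergence on bounded sets, where boundedness
of a family is equiboundedness).
-/

open MulOpposite Set
open scoped TensorProduct Pointwise

/-- `h` is a bounded linear map `E → L^b(F, G)`. -/
def IsCurriedBddHomK (𝕜 : Type*) [RCLike 𝕜] {E F G : Type*} [AddCommGroup E] [Module 𝕜 E]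
    [AddCommGroup F] [Module 𝕜 F] [AddCommGroup G] [Module 𝕜 G]
    (τE : TopologicalSpace E) (τF : TopologicalSpace F) (τG : TopologicalSpace G)
    (h : E → F → G) : Prop :=
  (∀ x x', h (x + x') = h x + h x') ∧
  (∀ (c : 𝕜) x, h (c • x) = c • h x) ∧
  (∀ x y y', h x (y + y') = h x y + h x y') ∧
  (∀ x (c : 𝕜) y, h x (c • y) = c • h x y) ∧
  (∀ x, BddMap 𝕜 τF τG (h x)) ∧
  (∀ B : Set E, VNBdd 𝕜 τE B → FamBdd 𝕜 τF τG (h '' B))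

section Helpers

variable {𝕜 : Type*} [RCLike 𝕜]
variable {E : Type*} [AddCommGroup E] [Module 𝕜 E] [tE : TopologicalSpace E]
variable {F : Type*} [AddCommGroup F] [Module 𝕜 F] [tF : TopologicalSpace F]
variable {G : Type*} [AddCommGroup G] [Module 𝕜 G] [tG : TopologicalSpace G]

lemma VNBdd.mono {s t : Set E} (ht : VNBdd 𝕜 tE t) (h : s ⊆ t) : VNBdd 𝕜 tE s :=
  fun V hV => (ht V hV).mono_right h

lemma vnbdd_singleton [ContinuousSMul 𝕜 E] (x : E) : VNBdd 𝕜 tE {x} :=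
  fun _ hV => (absorbent_nhds_zero hV).absorbs

lemma VNBdd.add [IsTopologicalAddGroup E] {s t : Set E} (hs : VNBdd 𝕜 tE s)
    (ht : VNBdd 𝕜 tE t) : VNBdd 𝕜 tE (s + t) := by
  intro V hV
  obtain ⟨W, hW, hWV⟩ := exists_nhds_zero_half hV
  refine ((hs W hW).add (ht W hW)).mono_left ?_
  rintro _ ⟨a, ha, b, hb, rfl⟩
  exact hWV a ha b hb

lemma vnbdd_prod {s : Set E} {t : Set F} (hs : VNBdd 𝕜 tE s) (ht : VNBdd 𝕜 tF t) :
    VNBdd 𝕜 (instTopologicalSpaceProd (t₁ := tE) (t₂ := tF)) (s ×ˢ t) := by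
  intro V hV
  rw [nhds_prod_eq] at hV
  obtain ⟨U₁, hU₁, U₂, hU₂, hU⟩ := Filter.mem_prod_iff.mp hV
  obtain ⟨r₁, hr₁⟩ := absorbs_iff_norm.mp (hs U₁ hU₁)
  obtain ⟨r₂, hr₂⟩ := absorbs_iff_norm.mp (ht U₂ hU₂)
  refine absorbs_iff_norm.mpr ⟨max r₁ r₂, fun c hc => ?_⟩
  rintro ⟨x, y⟩ ⟨hx, hy⟩
  obtain ⟨x', hx', rfl⟩ := hr₁ c (le_trans (le_max_left _ _) hc) hx
  obtain ⟨y', hy', rfl⟩ := hr₂ c (le_trans (le_max_right _ _) hc) hy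
  exact ⟨(x', y'), hU ⟨hx', hy'⟩, rfl⟩

lemma vnbdd_fst {s : Set (E × F)}
    (hs : VNBdd 𝕜 (instTopologicalSpaceProd (t₁ := tE) (t₂ := tF)) s) :
    VNBdd 𝕜 tE (Prod.fst '' s) := by
  intro V hV
  have h1 : (V ×ˢ (univ : Set F)) ∈ nhds (0 : E × F) := by
    rw [nhds_prod_eq]; exact Filter.prod_mem_prod hV Filter.univ_mem
  obtain ⟨r, hr⟩ := absorbs_iff_norm.mp (hs _ h1)
  refine absorbs_iff_norm.mpr ⟨r, fun c hc => ?_⟩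
  rintro _ ⟨p, hp, rfl⟩
  obtain ⟨q, hq, rfl⟩ := hr c hc hp
  exact ⟨q.1, hq.1, rfl⟩

lemma vnbdd_snd {s : Set (E × F)}
    (hs : VNBdd 𝕜 (instTopologicalSpaceProd (t₁ := tE) (t₂ := tF)) s) :
    VNBdd 𝕜 tF (Prod.snd '' s) := by
  intro V hV
  have h1 : ((univ : Set E) ×ˢ V) ∈ nhds (0 : E × F) := by
    rw [nhds_prod_eq]; exact Filter.prod_mem_prod Filter.univ_mem hV
  obtain ⟨r, hr⟩ := absorbs_iff_norm.mp (hs _ h1)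
  refine absorbs_iff_norm.mpr ⟨r, fun c hc => ?_⟩
  rintro _ ⟨p, hp, rfl⟩
  obtain ⟨q, hq, rfl⟩ := hr c hc hp
  exact ⟨q.2, hq.2, rfl⟩

end Helpers
section Master

variable {𝕜 : Type*} [RCLike 𝕜]
variable {E : Type*} [AddCommGroup E] [Module 𝕜 E] [tE : TopologicalSpace E]
variable {F : Type*} [AddCommGroup F] [Module 𝕜 F] [tF : TopologicalSpace F]
variable {G : Type*} [AddCommGroup G] [Module 𝕜 G] [tG : TopologicalSpace G]

lemma vnbdd_pointwise [IsTopologicalAddGroup G] [ContinuousSMul 𝕜 G]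
    (S : Set (TensorProduct 𝕜 E F →ₗ[𝕜] G))
    (h : ∀ (e : E) (f : F),
      VNBdd 𝕜 tG ((fun g : TensorProduct 𝕜 E F →ₗ[𝕜] G => g (e ⊗ₜ[𝕜] f)) '' S))
    (x : TensorProduct 𝕜 E F) :
    VNBdd 𝕜 tG ((fun g : TensorProduct 𝕜 E F →ₗ[𝕜] G => g x) '' S) := by
  induction x using TensorProduct.induction_on with
  | zero =>
      refine (vnbdd_singleton (0:G)).mono ?_
      rintro _ ⟨g, hg, rfl⟩; simp
  | tmul e f => exact h e f
  | add x y hx hy =>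
      refine (hx.add hy).mono ?_
      rintro _ ⟨g, hg, rfl⟩
      exact ⟨g x, ⟨g, hg, rfl⟩, g y, ⟨g, hg, rfl⟩, (map_add g x y).symm⟩

lemma masterA (hE : IsLCTop 𝕜 E tE) (hF : IsLCTop 𝕜 F tF) (hG : IsLCTop 𝕜 G tG)
    (τT : TopologicalSpace (TensorProduct 𝕜 E F))
    (hτT : IsBetaTensorTop 𝕜 tE tF τT)
    (S : Set (TensorProduct 𝕜 E F →ₗ[𝕜] G))
    (hS : FamBdd 𝕜 (instTopologicalSpaceProd (t₁ := tE) (t₂ := tF)) tG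
      ((fun g : TensorProduct 𝕜 E F →ₗ[𝕜] G => fun p : E × F => g (p.1 ⊗ₜ[𝕜] p.2)) '' S)) :
    FamBdd 𝕜 τT tG ((fun g : TensorProduct 𝕜 E F →ₗ[𝕜] G => ⇑g) '' S) := by
  classical
  haveI := hE.1.1; haveI := hE.1.2; haveI := hF.1.1; haveI := hF.1.2
  haveI := hG.1.1; haveI := hG.1.2
  -- reformulate hS
  have hS' : ∀ s : Set (E × F), VNBdd 𝕜 (instTopologicalSpaceProd (t₁ := tE) (t₂ := tF)) s →
      VNBdd 𝕜 tG (⋃ g ∈ S, (fun p : E × F => g (p.1 ⊗ₜ[𝕜] p.2)) '' s) := by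
    intro s hs
    have := hS s hs
    rwa [Set.biUnion_image] at this
  -- pointwise boundedness
  have hpt : ∀ x : TensorProduct 𝕜 E F,
      VNBdd 𝕜 tG ((fun g : TensorProduct 𝕜 E F →ₗ[𝕜] G => g x) '' S) := by
    refine vnbdd_pointwise S (fun e f => ?_)
    have h1 := hS' {(e, f)} (vnbdd_singleton _)
    have h2 : (⋃ g ∈ S, (fun p : E × F => g (p.1 ⊗ₜ[𝕜] p.2)) '' {((e : E), f)})
        = (fun g : TensorProduct 𝕜 E F →ₗ[𝕜] G => g (e ⊗ₜ[𝕜] f)) '' S := by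
      ext z; simp [eq_comm]
    rwa [h2] at h1
  -- the filter basis of preimage sets
  set q : Set G → Set (TensorProduct 𝕜 E F) := fun W => ⋂ g ∈ S, ⇑g ⁻¹' W with hq
  have hqmem : ∀ (W : Set G) x, x ∈ q W ↔ ∀ g ∈ S, g x ∈ W := by
    intro W x; simp [hq]
  have hqmono : ∀ {W W' : Set G}, W ⊆ W' → q W ⊆ q W' := by
    intro W W' hWW' x hx
    rw [hqmem] at hx ⊢
    exact fun g hg => hWW' (hx g hg)
  set FB : FilterBasis (TensorProduct 𝕜 E F) :=
    ⟨(fun W : Set G => q W) '' {W | W ∈ nhds (0:G)}, ⟨q univ, ⟨univ, Filter.univ_mem, rfl⟩⟩,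
      by
        rintro _ _ ⟨W₁, hW₁, rfl⟩ ⟨W₂, hW₂, rfl⟩
        refine ⟨q (W₁ ∩ W₂), ⟨W₁ ∩ W₂, Filter.inter_mem hW₁ hW₂, rfl⟩, ?_⟩
        exact subset_inter (hqmono inter_subset_left) (hqmono inter_subset_right)⟩ with hFB
  have hFBmem : ∀ {U : Set (TensorProduct 𝕜 E F)},
      U ∈ FB.sets ↔ ∃ W ∈ nhds (0:G), q W = U := by
    intro U; rfl
  set AGB : AddGroupFilterBasis (TensorProduct 𝕜 E F) :=
    { toFilterBasis := FB
      zero' := by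
        rintro _ ⟨W, hW, rfl⟩
        rw [hqmem]
        intro g _
        simpa using mem_of_mem_nhds hW
      add' := by
        rintro _ ⟨W, hW, rfl⟩
        obtain ⟨W', hW', hW'W⟩ := exists_nhds_zero_half hW
        refine ⟨q W', ⟨W', hW', rfl⟩, ?_⟩
        rintro _ ⟨a, ha, b, hb, rfl⟩
        rw [hqmem] at ha hb ⊢
        intro g hg
        rw [map_add]
        exact hW'W _ (ha g hg) _ (hb g hg)
      neg' := by
        rintro _ ⟨W, hW, rfl⟩
        have hnW : (fun x : G => -x) ⁻¹' W ∈ nhds (0:G) := by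
          have : Filter.Tendsto (fun x : G => -x) (nhds 0) (nhds 0) := by
            simpa using (continuous_neg.tendsto (0:G))
          exact this hW
        refine ⟨q _, ⟨_, hnW, rfl⟩, ?_⟩
        intro x hx
        rw [hqmem] at hx
        rw [Set.mem_preimage, hqmem]
        intro g hg
        rw [map_neg]
        exact hx g hg
      conj' := by
        rintro x₀ _ ⟨W, hW, rfl⟩
        refine ⟨q W, ⟨W, hW, rfl⟩, ?_⟩
        intro x hx
        have : x₀ + x + -x₀ = x := by abel
        simpa [this] using hx }
    with hAGB
  have hAGBmem : ∀ {U : Set (TensorProduct 𝕜 E F)},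
      U ∈ AGB ↔ ∃ W ∈ nhds (0:G), q W = U := fun {U} => hFBmem
  set MB : ModuleFilterBasis 𝕜 (TensorProduct 𝕜 E F) :=
    { toAddGroupFilterBasis := AGB
      smul' := by
        rintro _ ⟨W, hW, rfl⟩
        have hc : Filter.Tendsto (fun p : 𝕜 × G => p.1 • p.2)
            (nhds 0 ×ˢ nhds 0) (nhds (0:G)) := by
          have := (continuous_smul (M := 𝕜) (X := G)).tendsto ((0:𝕜), (0:G))
          rw [nhds_prod_eq] at this
          simpa using this
        obtain ⟨V, hV, W', hW', hVW'⟩ := Filter.mem_prod_iff.mp (hc hW)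
        refine ⟨V, hV, q W', ⟨W', hW', rfl⟩, ?_⟩
        rintro _ ⟨c, hc', x, hx, rfl⟩
        rw [hqmem] at hx ⊢
        intro g hg
        rw [map_smul]
        exact hVW' (Set.mk_mem_prod hc' (hx g hg))
      smul_left' := by
        rintro c _ ⟨W, hW, rfl⟩
        have hcW : (fun x : G => c • x) ⁻¹' W ∈ nhds (0:G) := by
          have : Filter.Tendsto (fun x : G => c • x) (nhds 0) (nhds 0) := by
            simpa using ((continuous_const_smul c).tendsto (0:G))
          exact this hW
        refine ⟨q _, ⟨_, hcW, rfl⟩, ?_⟩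
        intro x hx
        rw [hqmem] at hx
        rw [Set.mem_preimage, hqmem]
        intro g hg
        rw [map_smul]
        exact hx g hg
      smul_right' := by
        rintro m₀ _ ⟨W, hW, rfl⟩
        obtain ⟨r, hr⟩ := absorbs_iff_norm.mp (hpt m₀ W hW)
        set r' : ℝ := max r 1 with hr'
        have hr'pos : (0:ℝ) < r' := lt_of_lt_of_le one_pos (le_max_right _ _)
        have hball : Metric.ball (0:𝕜) r'⁻¹ ∈ nhds (0:𝕜) :=
          Metric.ball_mem_nhds _ (by positivity)
        refine Filter.eventually_of_mem hball ?_
        intro c hc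
        rw [hqmem]
        intro g hg
        rcases eq_or_ne c 0 with rfl | hc0
        · simpa using mem_of_mem_nhds hW
        · have hnc : r ≤ ‖c⁻¹‖ := by
            rw [norm_inv]
            have h1 : ‖c‖ < r'⁻¹ := by simpa using hc
            have h2 : r' ≤ ‖c‖⁻¹ := by
              rw [← inv_inv r']
              exact le_of_lt (inv_strictAnti₀ (norm_pos_iff.mpr hc0) h1)
            exact le_trans (le_max_left _ _) h2
          have : g m₀ ∈ c⁻¹ • W := hr c⁻¹ hnc ⟨g, hg, rfl⟩
          obtain ⟨w, hw, hweq⟩ := this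
          have h3 : c • g m₀ = w := by
            rw [← hweq, smul_smul, mul_inv_cancel₀ hc0, one_smul]
          rw [map_smul, h3]
          exact hw }
    with hMB
  -- the topology
  set τ' : TopologicalSpace (TensorProduct 𝕜 E F) := MB.topology with hτ'
  have hbasis : (@nhds _ τ' 0).HasBasis (fun V : Set (TensorProduct 𝕜 E F) => V ∈ AGB) id :=
    AGB.nhds_zero_hasBasis
  have hτ'grp : @IsTopologicalAddGroup (TensorProduct 𝕜 E F) τ' _ :=
    AGB.isTopologicalAddGroup
  have hτ'smul : @ContinuousSMul 𝕜 (TensorProduct 𝕜 E F) _ _ τ' :=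
    MB.continuousSMul
  -- τ' is locally convex
  have hτ'lc : IsLCTop 𝕜 (TensorProduct 𝕜 E F) τ' := by
    refine ⟨⟨hτ'grp, hτ'smul⟩, ?_⟩
    intro U hU
    obtain ⟨V, hV, hVU⟩ := hbasis.mem_iff.mp hU
    obtain ⟨W, hW, rfl⟩ := hAGBmem.mp hV
    obtain ⟨W', hW', hW'W, hW'conv⟩ := hG.2 W hW
    refine ⟨q W', hbasis.mem_of_mem (hAGBmem.mpr ⟨W', hW', rfl⟩), ?_, ?_⟩
    · exact subset_trans (hqmono hW'W) hVU
    · intro x hx y hy t ht0 ht1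
      rw [hqmem] at hx hy ⊢
      intro g hg
      rw [map_add, map_smul, map_smul]
      exact hW'conv (hx g hg) (hy g hg) t ht0 ht1
  -- the canonical bilinear map is bounded into τ'
  have hbdd : BddMap 𝕜 (instTopologicalSpaceProd (t₁ := tE) (t₂ := tF)) τ'
      (fun p : E × F => p.1 ⊗ₜ[𝕜] p.2) := by
    intro s hs V hV
    obtain ⟨V', hV', hV'V⟩ := hbasis.mem_iff.mp hV
    obtain ⟨W, hW, rfl⟩ := hAGBmem.mp hV'
    refine Absorbs.mono_left ?_ hV'V
    obtain ⟨r, hr⟩ := absorbs_iff_norm.mp (hS' s hs W hW)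
    refine absorbs_iff_norm.mpr ⟨max r 1, fun c hc => ?_⟩
    have hc0 : c ≠ 0 := by
      intro h
      rw [h, norm_zero] at hc
      exact absurd (le_trans (le_max_right _ _) hc) (by norm_num)
    rintro _ ⟨p, hp, rfl⟩
    rw [Set.mem_smul_set_iff_inv_smul_mem₀ hc0]
    show c⁻¹ • (p.1 ⊗ₜ[𝕜] p.2) ∈ q W
    rw [hqmem]
    intro g hg
    rw [map_smul]
    have hmem : g (p.1 ⊗ₜ[𝕜] p.2) ∈ ⋃ g ∈ S, (fun p : E × F => g (p.1 ⊗ₜ[𝕜] p.2)) '' s := by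
      exact Set.mem_biUnion hg ⟨p, hp, rfl⟩
    obtain ⟨w, hw, hweq⟩ := hr c (le_trans (le_max_left _ _) hc) hmem
    rw [← hweq, smul_smul, inv_mul_cancel₀ hc0, one_smul]
    exact hw
  -- maximality
  have hle : τT ≤ τ' := hτT.2.2 τ' hτ'lc hbdd
  -- conclude
  intro s hs
  have hs' : VNBdd 𝕜 τ' s := by
    intro V hV
    exact hs V (nhds_mono hle hV)
  intro W hW
  have hqW : Absorbs 𝕜 (q W) s :=
    hs' (q W) (hbasis.mem_of_mem (hAGBmem.mpr ⟨W, hW, rfl⟩))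
  obtain ⟨r, hr⟩ := absorbs_iff_norm.mp hqW
  refine absorbs_iff_norm.mpr ⟨r, fun c hc => ?_⟩
  intro z hz
  rw [Set.biUnion_image, Set.mem_iUnion₂] at hz
  obtain ⟨g, hg, hz'⟩ := hz
  obtain ⟨x, hx, rfl⟩ := hz'
  obtain ⟨u, hu, rfl⟩ := hr c hc hx
  rw [hqmem] at hu
  exact ⟨g u, hu g hg, (map_smul g c u).symm⟩

lemma masterB
    (τT : TopologicalSpace (TensorProduct 𝕜 E F))
    (hτT : IsBetaTensorTop 𝕜 tE tF τT)
    (S : Set (TensorProduct 𝕜 E F →ₗ[𝕜] G))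
    (hS : FamBdd 𝕜 τT tG ((fun g : TensorProduct 𝕜 E F →ₗ[𝕜] G => ⇑g) '' S)) :
    FamBdd 𝕜 (instTopologicalSpaceProd (t₁ := tE) (t₂ := tF)) tG
      ((fun g : TensorProduct 𝕜 E F →ₗ[𝕜] G => fun p : E × F => g (p.1 ⊗ₜ[𝕜] p.2)) '' S) := by
  intro s hs
  have h1 := hS _ (hτT.2.1 s hs)
  refine VNBdd.mono h1 ?_
  intro z hz
  rw [Set.biUnion_image, Set.mem_iUnion₂] at hz ⊢
  obtain ⟨g, hg, hz'⟩ := hz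
  obtain ⟨p, hp, rfl⟩ := hz'
  exact ⟨g, hg, p.1 ⊗ₜ[𝕜] p.2, ⟨p, hp, rfl⟩, rfl⟩

lemma lemPart1 (hE : IsLCTop 𝕜 E tE) (hF : IsLCTop 𝕜 F tF) (hG : IsLCTop 𝕜 G tG)
    (τT : TopologicalSpace (TensorProduct 𝕜 E F))
    (hτT : IsBetaTensorTop 𝕜 tE tF τT) (φ : E →ₗ[𝕜] F →ₗ[𝕜] G) :
    BddMap 𝕜 (instTopologicalSpaceProd (t₁ := tE) (t₂ := tF)) tG
      (fun p : E × F => φ p.1 p.2) ↔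
    BddMap 𝕜 τT tG ⇑(TensorProduct.lift φ) := by
  have hcomp : (fun p : E × F => TensorProduct.lift φ (p.1 ⊗ₜ[𝕜] p.2))
      = fun p : E × F => φ p.1 p.2 := by
    funext p; simp
  constructor
  · intro hb
    have hS : FamBdd 𝕜 (instTopologicalSpaceProd (t₁ := tE) (t₂ := tF)) tG
        ((fun g : TensorProduct 𝕜 E F →ₗ[𝕜] G => fun p : E × F => g (p.1 ⊗ₜ[𝕜] p.2))
          '' {TensorProduct.lift φ}) := by
      intro s hs
      rw [Set.image_singleton, Set.biUnion_singleton, hcomp]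
      exact hb s hs
    have h := masterA hE hF hG τT hτT {TensorProduct.lift φ} hS
    intro s hs
    have h2 := h s hs
    rwa [Set.image_singleton, Set.biUnion_singleton] at h2
  · intro hb
    have hS : FamBdd 𝕜 τT tG
        ((fun g : TensorProduct 𝕜 E F →ₗ[𝕜] G => ⇑g) '' {TensorProduct.lift φ}) := by
      intro s hs
      rw [Set.image_singleton, Set.biUnion_singleton]
      exact hb s hs
    have h := masterB τT hτT {TensorProduct.lift φ} hS
    intro s hs
    have h2 := h s hs
    rwa [Set.image_singleton, Set.biUnion_singleton, hcomp] at h2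

end Master
theorem statement18 {𝕜 : Type*} [RCLike 𝕜]
    (E : Type*) [AddCommGroup E] [Module 𝕜 E] [TopologicalSpace E] [T2Space E]
    (hE : IsLCTop 𝕜 E (inferInstance))
    (F : Type*) [AddCommGroup F] [Module 𝕜 F] [TopologicalSpace F] [T2Space F]
    (hF : IsLCTop 𝕜 F (inferInstance))
    (G : Type*) [AddCommGroup G] [Module 𝕜 G] [TopologicalSpace G] [T2Space G]
    (hG : IsLCTop 𝕜 G (inferInstance))
    -- the bornological tensor product topology on E ⊗[𝕜] F
    (τT : TopologicalSpace (TensorProduct 𝕜 E F))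
    (hτT : IsBetaTensorTop 𝕜 (inferInstance) (inferInstance) τT) :
    -- a bilinear map is bounded iff the associated linear map on E ⊗_β F is bounded
    ((∀ φ : E →ₗ[𝕜] F →ₗ[𝕜] G,
        (BddMap 𝕜 (inferInstance : TopologicalSpace (E × F)) (inferInstance)
          (fun p : E × F => φ p.1 p.2) ↔
         BddMap 𝕜 τT (inferInstance) ⇑(TensorProduct.lift φ)))) ∧
    -- L^b(E ⊗_β F, G) ≅ L^b(E, F; G) bornologically, via the transpose of ⊗
    ((Set.BijOn (fun (g : TensorProduct 𝕜 E F →ₗ[𝕜] G) =>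
          (fun p : E × F => g (p.1 ⊗ₜ[𝕜] p.2)))
        {g | BddMap 𝕜 τT (inferInstance) ⇑g}
        {f | BddMap 𝕜 (inferInstance : TopologicalSpace (E × F)) (inferInstance) f ∧
             IsBilinMap 𝕜 f} ∧
      ∀ S : Set (TensorProduct 𝕜 E F →ₗ[𝕜] G),
        S ⊆ {g | BddMap 𝕜 τT (inferInstance) ⇑g} →
        (FamBdd 𝕜 τT (inferInstance)
            ((fun g : TensorProduct 𝕜 E F →ₗ[𝕜] G => (g : TensorProduct 𝕜 E F → G)) '' S) ↔
         FamBdd 𝕜 (inferInstance : TopologicalSpace (E × F)) (inferInstance)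
            ((fun (g : TensorProduct 𝕜 E F →ₗ[𝕜] G) =>
              (fun p : E × F => g (p.1 ⊗ₜ[𝕜] p.2))) '' S)))) ∧
    -- L^b(E, F; G) ≅ L^b(E, L^b(F, G)) bornologically, via the exponential law
    ((Set.BijOn (fun (f : E × F → G) => Function.curry f)
        {f | BddMap 𝕜 (inferInstance : TopologicalSpace (E × F)) (inferInstance) f ∧
             IsBilinMap 𝕜 f}
        {h | IsCurriedBddHomK 𝕜 (inferInstance) (inferInstance) (inferInstance) h} ∧
      ∀ S : Set (E × F → G),
        S ⊆ {f | BddMap 𝕜 (inferInstance : TopologicalSpace (E × F)) (inferInstance) f ∧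
             IsBilinMap 𝕜 f} →
        (FamBdd 𝕜 (inferInstance : TopologicalSpace (E × F)) (inferInstance) S ↔
         CurFamBdd 𝕜 (inferInstance) (inferInstance) (inferInstance)
           (Function.curry '' S)))) := by
  haveI := hE.1.1; haveI := hE.1.2; haveI := hF.1.1; haveI := hF.1.2
  haveI := hG.1.1; haveI := hG.1.2
  -- key set identity for the exponential law
  have id1 : ∀ (f : E × F → G) (B : Set E) (B' : Set F),
      (⋃ h ∈ (Function.curry f) '' B, h '' B') = f '' (B ×ˢ B') := by
    intro f B B'
    ext z
    constructor
    · intro hz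
      rw [Set.biUnion_image, Set.mem_iUnion₂] at hz
      obtain ⟨x, hx, y, hy, rfl⟩ := hz
      exact ⟨(x, y), ⟨hx, hy⟩, rfl⟩
    · rintro ⟨⟨x, y⟩, ⟨hx, hy⟩, rfl⟩
      rw [Set.biUnion_image, Set.mem_iUnion₂]
      exact ⟨x, hx, y, hy, rfl⟩
  have id2 : ∀ (S : Set (E × F → G)) (B : Set E) (B' : Set F),
      (⋃ φ ∈ ⋃ h ∈ Function.curry '' S, h '' B, φ '' B') = ⋃ f ∈ S, f '' (B ×ˢ B') := by
    intro S B B'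
    ext z
    constructor
    · intro hz
      rw [Set.mem_iUnion₂] at hz
      obtain ⟨φ, hφ, hz'⟩ := hz
      rw [Set.biUnion_image, Set.mem_iUnion₂] at hφ
      obtain ⟨f, hf, hφ'⟩ := hφ
      obtain ⟨x, hx, rfl⟩ := hφ'
      obtain ⟨y, hy, rfl⟩ := hz'
      exact Set.mem_biUnion hf ⟨(x, y), ⟨hx, hy⟩, rfl⟩
    · intro hz
      rw [Set.mem_iUnion₂] at hz
      obtain ⟨f, hf, ⟨x, y⟩, ⟨hx, hy⟩, rfl⟩ := hz
      rw [Set.mem_iUnion₂]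
      refine ⟨Function.curry f x, ?_, y, hy, rfl⟩
      rw [Set.biUnion_image, Set.mem_iUnion₂]
      exact ⟨f, hf, x, hx, rfl⟩
  refine ⟨lemPart1 hE hF hG τT hτT, ⟨⟨?_, ?_, ?_⟩, ?_⟩, ⟨?_, ?_, ?_⟩, ?_⟩
  · -- Part 2a MapsTo
    intro g hg
    refine ⟨?_, ?_, ?_, ?_, ?_⟩
    · intro s hs
      rw [show (fun p : E × F => g (p.1 ⊗ₜ[𝕜] p.2)) '' s
          = ⇑g '' ((fun p : E × F => p.1 ⊗ₜ[𝕜] p.2) '' s) from (Set.image_image _ _ _).symm]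
      exact hg _ (hτT.2.1 s hs)
    · intro m m' n; simp [TensorProduct.add_tmul]
    · intro c m n
      show g ((c • m) ⊗ₜ[𝕜] n) = c • g (m ⊗ₜ[𝕜] n)
      rw [← TensorProduct.smul_tmul', map_smul]
    · intro m n n'; simp [TensorProduct.tmul_add]
    · intro c m n; simp [TensorProduct.tmul_smul]
  · -- Part 2a InjOn
    intro g hg g' hg' h
    apply TensorProduct.ext'
    intro x y
    exact congrFun h (x, y)
  · -- Part 2a SurjOn
    rintro f ⟨hfb, hb1, hb2, hb3, hb4⟩
    set φ : E →ₗ[𝕜] F →ₗ[𝕜] G := LinearMap.mk₂ 𝕜 (fun m n => f (m, n))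
      (fun m m' n => hb1 m m' n) (fun c m n => hb2 c m n)
      (fun m n n' => hb3 m n n') (fun c m n => hb4 c m n) with hφ
    have hφf : (fun p : E × F => φ p.1 p.2) = f := funext fun p => rfl
    refine ⟨TensorProduct.lift φ, ?_, ?_⟩
    · show BddMap 𝕜 τT _ ⇑(TensorProduct.lift φ)
      refine (lemPart1 hE hF hG τT hτT φ).mp ?_
      rw [hφf]; exact hfb
    · funext p
      show TensorProduct.lift φ (p.1 ⊗ₜ[𝕜] p.2) = f p
      rw [TensorProduct.lift.tmul]
      rfl
  · -- Part 2b
    intro S _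
    exact ⟨fun h => masterB τT hτT S h, fun h => masterA hE hF hG τT hτT S h⟩
  · -- Part 3a MapsTo
    rintro f ⟨hfb, hb1, hb2, hb3, hb4⟩
    refine ⟨fun x x' => funext fun y => hb1 x x' y,
      fun c x => funext fun y => hb2 c x y,
      fun x y y' => hb3 x y y', fun x c y => hb4 c x y, ?_, ?_⟩
    · intro x B hB
      have h1 : Function.curry f x '' B = f '' ({x} ×ˢ B) := by
        rw [← id1 f {x} B, Set.image_singleton, Set.biUnion_singleton]
      rw [h1]
      exact hfb _ (vnbdd_prod (vnbdd_singleton x) hB)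
    · intro B hB B' hB'
      rw [id1]
      exact hfb _ (vnbdd_prod hB hB')
  · -- Part 3a InjOn
    intro f hf f' hf' h
    have h2 := congrArg Function.uncurry h
    rwa [Function.uncurry_curry, Function.uncurry_curry] at h2
  · -- Part 3a SurjOn
    intro h hh
    refine ⟨Function.uncurry h, ⟨?_, ?_, ?_, ?_, ?_⟩, Function.curry_uncurry h⟩
    · intro s hs
      have h6 := hh.2.2.2.2.2 (Prod.fst '' s) (vnbdd_fst hs) (Prod.snd '' s) (vnbdd_snd hs)
      refine VNBdd.mono h6 ?_
      rintro _ ⟨p, hp, rfl⟩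
      rw [Set.biUnion_image, Set.mem_iUnion₂]
      exact ⟨p.1, ⟨p, hp, rfl⟩, p.2, ⟨p, hp, rfl⟩, rfl⟩
    · intro m m' n
      show h (m + m') n = h m n + h m' n
      rw [hh.1]; rfl
    · intro c m n
      show h (c • m) n = c • h m n
      rw [hh.2.1]; rfl
    · intro m n n'
      exact hh.2.2.1 m n n'
    · intro c m n
      exact hh.2.2.2.1 m c n
  · -- Part 3b
    intro S _
    constructor
    · intro hfam B hB B' hB'
      rw [id2]
      exact hfam _ (vnbdd_prod hB hB')
    · intro hcur s hs
      have h1 := hcur (Prod.fst '' s) (vnbdd_fst hs) (Prod.snd '' s) (vnbdd_snd hs)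
      rw [id2] at h1
      refine VNBdd.mono h1 ?_
      intro z hz
      rw [Set.mem_iUnion₂] at hz ⊢
      obtain ⟨f, hf, p, hp, rfl⟩ := hz
      exact ⟨f, hf, p, ⟨⟨p, hp, rfl⟩, ⟨p, hp, rfl⟩⟩, rfl⟩
end
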